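/- arXiv:2603.09903 — 8 statements merged into one kernel-verified Lean document; each statement's English description precedes it below -/
import Mathlib

section
/- Let C be a category and let R be a class of morphisms of C closed under isomorphism in the arrow category Arrow(C); regard R as a full subcategory of Arrow(C). Then R is the right class of an orthogonal factorization system on C if and only if the following three conditions hold: (1) the full subcategory inclusion R ↪ Arrow(C) admits a left adjoint (reflector) L; (2) for every morphism f of C, the target functor Arrow(C) → C sends the unit component f → L(f) to an isomorphism; (3) the morphisms of C belonging to R are closed under composition. Moreover, when these conditions hold, a morphism f : X → Y of C is left orthogonal to every member of R if and only if the morphism (f, id_Y) : f → id_Y of Arrow(C) is sent to an isomorphism by the reflector L. -/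
open CategoryTheory

universe v u

/-- `f` is left orthogonal to `g`: every commutative square from `f` to `g` admits a
unique diagonal filler. -/
def LeftOrthogonal {C : Type u} [Category.{v} C] {X Y A B : C} (f : X ⟶ Y) (g : A ⟶ B) : Prop :=
  ∀ (u : X ⟶ A) (v : Y ⟶ B), u ≫ g = f ≫ v → ∃! d : Y ⟶ A, f ≫ d = u ∧ d ≫ g = v

/-- `(L, R)` is an orthogonal factorization system on `C`. -/
structure IsOFS {C : Type u} [Category.{v} C] (L R : MorphismProperty C) : Prop where
  retract_left : ∀ (a b : Arrow C) (i : a ⟶ b) (r : b ⟶ a), i ≫ r = 𝟙 a → L b.hom → L a.hom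
  retract_right : ∀ (a b : Arrow C) (i : a ⟶ b) (r : b ⟶ a), i ≫ r = 𝟙 a → R b.hom → R a.hom
  factor : ∀ {X Y : C} (f : X ⟶ Y),
    ∃ (Z : C) (l : X ⟶ Z) (r : Z ⟶ Y), L l ∧ R r ∧ l ≫ r = f
  orth : ∀ {X Y A B : C} (f : X ⟶ Y) (g : A ⟶ B), L f → R g → LeftOrthogonal f g

section Aux
variable {C : Type u} [Category.{v} C]

/-- Composition of right-orthogonal maps. -/
lemma leftOrthogonal_comp {X Y A B D : C} {f : X ⟶ Y} {g : A ⟶ B} {h : B ⟶ D}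
    (hg : LeftOrthogonal f g) (hh : LeftOrthogonal f h) : LeftOrthogonal f (g ≫ h) := by
  intro u v hsq
  obtain ⟨d₁, ⟨hd₁₁, hd₁₂⟩, hu₁⟩ := hh (u ≫ g) v (by simpa using hsq)
  obtain ⟨d₂, ⟨hd₂₁, hd₂₂⟩, hu₂⟩ := hg u d₁ hd₁₁.symm
  refine ⟨d₂, ⟨hd₂₁, by rw [← Category.assoc, hd₂₂, hd₁₂]⟩, ?_⟩
  rintro d ⟨hda, hdb⟩
  have h1 : d ≫ g = d₁ := hu₁ (d ≫ g) ⟨by rw [← Category.assoc, hda], by simpa using hdb⟩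
  exact hu₂ d ⟨hda, h1⟩

/-- Left orthogonality is stable under retracts (in the arrow category) on the left. -/
lemma leftOrthogonal_retract {a b : Arrow C} (i : a ⟶ b) (r : b ⟶ a) (hir : i ≫ r = 𝟙 a)
    {A B : C} {g : A ⟶ B} (hb : LeftOrthogonal b.hom g) : LeftOrthogonal a.hom g := by
  have hil : i.left ≫ r.left = 𝟙 a.left := by
    have := congrArg CommaMorphism.left hir; simpa using this
  have hirr : i.right ≫ r.right = 𝟙 a.right := by
    have := congrArg CommaMorphism.right hir; simpa using this
  intro u v hsq
  obtain ⟨d', ⟨hd1, hd2⟩, hdu⟩ := hb (r.left ≫ u) (r.right ≫ v)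
    (by rw [Category.assoc, hsq, ← Category.assoc, Arrow.w r, Category.assoc])
  refine ⟨i.right ≫ d', ⟨?_, ?_⟩, ?_⟩
  · rw [← Category.assoc, ← Arrow.w i, Category.assoc, hd1, ← Category.assoc, hil]; simp
  · rw [Category.assoc, hd2, ← Category.assoc, hirr]; simp
  · rintro d ⟨hda, hdb⟩
    have : r.right ≫ d = d' := by
      refine hdu _ ⟨?_, ?_⟩
      · rw [← Category.assoc, ← Arrow.w r, Category.assoc, hda]
      · rw [Category.assoc, hdb]
    rw [← this, ← Category.assoc, hirr]; simp

variable (R : MorphismProperty C)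

/-- A "reflective factorization" of `f` through `Z`. -/
def IsReflFact {X Y : C} (f : X ⟶ Y) (Z : C) (e : X ⟶ Z) (r : Z ⟶ Y) : Prop :=
  R r ∧ e ≫ r = f ∧ ∀ {A B : C} (g : A ⟶ B), R g → ∀ (u : X ⟶ A) (v : Y ⟶ B),
    u ≫ g = f ≫ v → ∃! s : Z ⟶ A, e ≫ s = u ∧ s ≫ g = r ≫ v

variable {R}

lemma IsReflFact.left_iso {X Y Z Z' : C} {f : X ⟶ Y} {e : X ⟶ Z} {r : Z ⟶ Y}
    {e' : X ⟶ Z'} {r' : Z' ⟶ Z}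
    (h1 : IsReflFact R f Z e r) (h2 : IsReflFact R e Z' e' r')
    (hComp : ∀ {X Y Z : C} (f : X ⟶ Y) (g : Y ⟶ Z), R f → R g → R (f ≫ g)) :
    IsIso r' := by
  obtain ⟨hr, hfac, U⟩ := h1
  obtain ⟨hr', hfac', U'⟩ := h2
  obtain ⟨s, ⟨hs1, hs2⟩, -⟩ := U (r' ≫ r) (hComp _ _ hr' hr) e' (𝟙 Y)
    (by rw [← Category.assoc, hfac', hfac, Category.comp_id])
  have uc1 := U r hr e (𝟙 Y) (by rw [hfac, Category.comp_id])
  have hsr' : s ≫ r' = 𝟙 Z := by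
    refine (uc1.unique ⟨?_, ?_⟩ ⟨by simp, by simp⟩ : s ≫ r' = 𝟙 Z)
    · rw [← Category.assoc, hs1, hfac']
    · rw [Category.assoc]; exact hs2
  have uc2 := U' r' hr' e' (𝟙 Z) (by rw [hfac', Category.comp_id])
  have hr's : r' ≫ s = 𝟙 Z' := by
    refine (uc2.unique ⟨?_, ?_⟩ ⟨by simp, by simp⟩ : r' ≫ s = 𝟙 Z')
    · rw [← Category.assoc, hfac']; exact hs1
    · rw [Category.assoc, hsr']
  exact ⟨s, hr's, hsr'⟩

lemma IsReflFact.llp {X Y Z Z' : C} {f : X ⟶ Y} {e : X ⟶ Z} {r : Z ⟶ Y}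
    {e' : X ⟶ Z'} {r' : Z' ⟶ Z}
    (h1 : IsReflFact R f Z e r) (h2 : IsReflFact R e Z' e' r')
    (hComp : ∀ {X Y Z : C} (f : X ⟶ Y) (g : Y ⟶ Z), R f → R g → R (f ≫ g))
    {A B : C} (g : A ⟶ B) (hg : R g) : LeftOrthogonal e g := by
  have hiso : IsIso r' := h1.left_iso h2 hComp
  obtain ⟨hr', hfac', U'⟩ := h2
  intro u v hsq
  obtain ⟨s, ⟨hs1, hs2⟩, hsu⟩ := U' g hg u v hsq
  refine ⟨inv r' ≫ s, ⟨?_, ?_⟩, ?_⟩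
  · rw [← hfac', Category.assoc, IsIso.hom_inv_id_assoc, hs1]
  · rw [Category.assoc, hs2, IsIso.inv_hom_id_assoc]
  · rintro d ⟨hda, hdb⟩
    have : r' ≫ d = s := by
      refine hsu _ ⟨?_, ?_⟩
      · rw [← Category.assoc, hfac', hda]
      · rw [Category.assoc, hdb]
    rw [← this, IsIso.inv_hom_id_assoc]

end Aux

section Refl
variable {C : Type u} [Category.{v} C] {R : MorphismProperty C}
  (L : Arrow C ⥤ ObjectProperty.FullSubcategory (fun g : Arrow C => R g.hom))
  (adj : L ⊣ ObjectProperty.ι (fun g : Arrow C => R g.hom))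

lemma unit_univ (a : Arrow C) (G : ObjectProperty.FullSubcategory (fun g : Arrow C => R g.hom))
    (φ : a ⟶ (ObjectProperty.ι (fun g : Arrow C => R g.hom)).obj G) :
    ∃! ψ : L.obj a ⟶ G,
      adj.unit.app a ≫ (ObjectProperty.ι (fun g : Arrow C => R g.hom)).map ψ = φ := by
  refine ⟨(adj.homEquiv a G).symm φ, ?_, ?_⟩
  · exact (adj.homEquiv a G).apply_symm_apply φ
  · intro ψ hψ
    exact (Equiv.eq_symm_apply _).mpr hψ

lemma exists_reflFact (hR : ∀ (a b : Arrow C), (a ≅ b) → R a.hom → R b.hom)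
    (hU : ∀ g : Arrow C, IsIso ((adj.unit.app g).right)) {X Y : C} (f : X ⟶ Y) :
    ∃ (Z : C) (e : X ⟶ Z) (r : Z ⟶ Y), IsReflFact R f Z e r := by
  set a := Arrow.mk f with ha
  set ρ : Arrow C := (ObjectProperty.ι (fun g : Arrow C => R g.hom)).obj (L.obj a)
    with hρ
  set η : a ⟶ ρ := adj.unit.app a with hη
  haveI : IsIso η.right := hU a
  refine ⟨ρ.left, η.left, ρ.hom ≫ inv η.right, ?_, ?_, ?_⟩
  · refine hR ρ (Arrow.mk (ρ.hom ≫ inv η.right)) ?_ (L.obj a).property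
    exact Arrow.isoMk (Iso.refl _) (asIso η.right).symm (by simp)
  · rw [← Category.assoc]
    have := Arrow.w η
    rw [this]
    simp only [Category.assoc, IsIso.hom_inv_id, Category.comp_id]
    rfl
  · intro A B g hg u v hsq
    set G : ObjectProperty.FullSubcategory (fun g : Arrow C => R g.hom) := ⟨Arrow.mk g, hg⟩ with hG
    set φ : a ⟶ (ObjectProperty.ι (fun g : Arrow C => R g.hom)).obj G :=
      Arrow.homMk' u v hsq with hφ
    obtain ⟨ψ, hψ, hψu⟩ := unit_univ L adj a G φ
    set ψ' : ρ ⟶ Arrow.mk g := (ObjectProperty.ι (fun g : Arrow C => R g.hom)).map ψ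
      with hψ'
    have hl : η.left ≫ ψ'.left = u := by
      have := congrArg CommaMorphism.left hψ
      exact this
    have hr : η.right ≫ ψ'.right = v := by
      have := congrArg CommaMorphism.right hψ
      exact this
    refine ⟨ψ'.left, ⟨hl, ?_⟩, ?_⟩
    · have hw := Arrow.w ψ'
      simp only [Arrow.mk_hom] at hw
      rw [hw, Category.assoc, ← hr]
      simp
    · rintro s ⟨hs1, hs2⟩
      have hwseq : s ≫ g = ρ.hom ≫ inv η.right ≫ v := by
        rw [hs2]; simp
      set χ : L.obj a ⟶ G := ObjectProperty.homMk
        (Arrow.homMk (f := ρ) (g := Arrow.mk g) (u := s) (v := inv η.right ≫ v)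
          (by simpa using hwseq) : ρ ⟶ Arrow.mk g) with hχ
      have hχeq : adj.unit.app a ≫ (ObjectProperty.ι (fun g : Arrow C => R g.hom)).map χ
          = φ := by
        apply Arrow.hom_ext
        · exact hs1
        · show η.right ≫ (inv η.right ≫ v) = v
          simp
      have hfin := congrArg
        (fun t => ((ObjectProperty.ι (fun g : Arrow C => R g.hom)).map t).left)
        (hψu χ hχeq)
      exact hfin
end Refl

section PartB
variable {C : Type u} [Category.{v} C] {R : MorphismProperty C}
  {L : Arrow C ⥤ ObjectProperty.FullSubcategory (fun g : Arrow C => R g.hom)}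

lemma partB_mpr (adj : L ⊣ ObjectProperty.ι (fun g : Arrow C => R g.hom))
    {X Y : C} (f : X ⟶ Y)
    (hκ : IsIso (L.map (Arrow.homMk (u := f) (v := 𝟙 Y) (by simp) :
      Arrow.mk f ⟶ Arrow.mk (𝟙 Y))))
    {A B : C} (g : A ⟶ B) (hg : R g) : LeftOrthogonal f g := by
  set ι := ObjectProperty.ι (fun g : Arrow C => R g.hom) with hι
  set k : Arrow.mk f ⟶ Arrow.mk (𝟙 Y) :=
    (Arrow.homMk (u := f) (v := 𝟙 Y) (by simp)) with hk
  set κ := L.map k with hκdef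
  intro u v hsq
  set G : ObjectProperty.FullSubcategory (fun g : Arrow C => R g.hom) := ⟨Arrow.mk g, hg⟩ with hG
  set φ : Arrow.mk f ⟶ ι.obj G := Arrow.homMk' u v hsq with hφ
  obtain ⟨ψ, hψ, hψu⟩ := unit_univ L adj (Arrow.mk f) G φ
  set t : L.obj (Arrow.mk (𝟙 Y)) ⟶ G := inv κ ≫ ψ with ht
  set χ : Arrow.mk (𝟙 Y) ⟶ ι.obj G := adj.unit.app (Arrow.mk (𝟙 Y)) ≫ ι.map t with hχ
  have hnat : k ≫ adj.unit.app (Arrow.mk (𝟙 Y)) = adj.unit.app (Arrow.mk f) ≫ ι.map κ :=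
    adj.unit.naturality k
  have hkχ : k ≫ χ = φ := by
    rw [hχ, ← Category.assoc, hnat, Category.assoc, ← Functor.map_comp, ht,
      IsIso.hom_inv_id_assoc]
    exact hψ
  have h1 : f ≫ χ.left = u := by
    have := congrArg CommaMorphism.left hkχ
    simpa [hk, hφ] using this
  have hv : χ.right = v := by
    have := congrArg CommaMorphism.right hkχ
    simpa [hk, hφ] using this
  have h2 : χ.left ≫ g = v := by
    have hw := Arrow.w χ
    simpa [hv] using hw
  refine ⟨χ.left, ⟨h1, h2⟩, ?_⟩
  rintro d' ⟨hd1, hd2⟩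
  set χ' : Arrow.mk (𝟙 Y) ⟶ ι.obj G :=
    (Arrow.homMk (f := Arrow.mk (𝟙 Y)) (g := Arrow.mk g) (u := d') (v := v)
      (by simpa using hd2)) with hχ'
  obtain ⟨t', ht', ht'u⟩ := unit_univ L adj (Arrow.mk (𝟙 Y)) G χ'
  have hkt' : adj.unit.app (Arrow.mk f) ≫ ι.map (κ ≫ t') = φ := by
    rw [Functor.map_comp, ← Category.assoc, ← hnat, Category.assoc, ht']
    apply Arrow.hom_ext
    · simpa [hk, hχ', hφ] using hd1
    · simp [hk, hχ', hφ]
  have hκt' : κ ≫ t' = ψ := hψu _ hkt'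
  have ht'' : t' = t := by rw [ht, ← hκt', IsIso.inv_hom_id_assoc]
  have : χ' = χ := by rw [hχ, ← ht'', ht']
  have := congrArg CommaMorphism.left this
  simpa [hχ'] using this

lemma partB_mp (adj : L ⊣ ObjectProperty.ι (fun g : Arrow C => R g.hom))
    {X Y : C} (f : X ⟶ Y)
    (hO : ∀ {A B : C} (g : A ⟶ B), R g → LeftOrthogonal f g) :
    IsIso (L.map (Arrow.homMk (u := f) (v := 𝟙 Y) (by simp) :
      Arrow.mk f ⟶ Arrow.mk (𝟙 Y))) := by
  set ι := ObjectProperty.ι (fun g : Arrow C => R g.hom) with hι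
  set k : Arrow.mk f ⟶ Arrow.mk (𝟙 Y) :=
    (Arrow.homMk (u := f) (v := 𝟙 Y) (by simp)) with hk
  set κ := L.map k with hκdef
  have hρR : R (ι.obj (L.obj (Arrow.mk f))).hom := (L.obj (Arrow.mk f)).property
  have hρ'R : R (ι.obj (L.obj (Arrow.mk (𝟙 Y)))).hom := (L.obj (Arrow.mk (𝟙 Y))).property
  have hnat : k ≫ adj.unit.app (Arrow.mk (𝟙 Y)) = adj.unit.app (Arrow.mk f) ≫ ι.map κ :=
    adj.unit.naturality k
  have hnatl : f ≫ (adj.unit.app (Arrow.mk (𝟙 Y))).left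
      = (adj.unit.app (Arrow.mk f)).left ≫ (ι.map κ).left := by
    have := congrArg CommaMorphism.left hnat
    simpa [hk] using this
  have hnatr : (adj.unit.app (Arrow.mk (𝟙 Y))).right
      = (adj.unit.app (Arrow.mk f)).right ≫ (ι.map κ).right := by
    have := congrArg CommaMorphism.right hnat
    simpa [hk] using this
  obtain ⟨d, ⟨hd1, hd2⟩, -⟩ := hO (ι.obj (L.obj (Arrow.mk f))).hom hρR
    (adj.unit.app (Arrow.mk f)).left (adj.unit.app (Arrow.mk f)).right
    (by simpa using Arrow.w (adj.unit.app (Arrow.mk f)))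
  set σ : Arrow.mk (𝟙 Y) ⟶ ι.obj (L.obj (Arrow.mk f)) :=
    (Arrow.homMk (f := Arrow.mk (𝟙 Y)) (g := ι.obj (L.obj (Arrow.mk f))) (u := d)
      (v := (adj.unit.app (Arrow.mk f)).right) (by simpa using hd2)) with hσ
  obtain ⟨τ, hτ, hτu⟩ := unit_univ L adj (Arrow.mk (𝟙 Y)) (L.obj (Arrow.mk f)) σ
  have hκτ : κ ≫ τ = 𝟙 (L.obj (Arrow.mk f)) := by
    have huv := unit_univ L adj (Arrow.mk f) (L.obj (Arrow.mk f)) (adj.unit.app (Arrow.mk f))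
    refine huv.unique ?_ (Category.comp_id _)
    show adj.unit.app (Arrow.mk f) ≫ ι.map (κ ≫ τ) = adj.unit.app (Arrow.mk f)
    rw [Functor.map_comp, ← Category.assoc, ← hnat, Category.assoc, hτ]
    apply Arrow.hom_ext
    · simpa [hk, hσ] using hd1
    · simp [hk, hσ]
  have hστ : σ ≫ ι.map κ = adj.unit.app (Arrow.mk (𝟙 Y)) := by
    apply Arrow.hom_ext
    · -- d ≫ κ.left = η'.left
      have uc := hO (ι.obj (L.obj (Arrow.mk (𝟙 Y)))).hom hρ'R
        (f ≫ (adj.unit.app (Arrow.mk (𝟙 Y))).left) (adj.unit.app (Arrow.mk (𝟙 Y))).right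
        (by rw [Category.assoc]; congr 1; simpa using Arrow.w (adj.unit.app (Arrow.mk (𝟙 Y))))
      have hwκ : (ι.map κ).left ≫ (ι.obj (L.obj (Arrow.mk (𝟙 Y)))).hom
          = (ι.obj (L.obj (Arrow.mk f))).hom ≫ (ι.map κ).right := Arrow.w (ι.map κ)
      refine uc.unique ⟨?_, ?_⟩
        ⟨rfl, by simpa using Arrow.w (adj.unit.app (Arrow.mk (𝟙 Y)))⟩
      · show f ≫ d ≫ (ι.map κ).left = f ≫ (adj.unit.app (Arrow.mk (𝟙 Y))).left
        rw [← Category.assoc, hd1, hnatl]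
      · show (d ≫ (ι.map κ).left) ≫ (ι.obj (L.obj (Arrow.mk (𝟙 Y)))).hom
          = (adj.unit.app (Arrow.mk (𝟙 Y))).right
        rw [Category.assoc, hwκ, ← Category.assoc, hd2, hnatr]
    · show (adj.unit.app (Arrow.mk f)).right ≫ (ι.map κ).right
        = (adj.unit.app (Arrow.mk (𝟙 Y))).right
      rw [hnatr]
  have hτκ : τ ≫ κ = 𝟙 (L.obj (Arrow.mk (𝟙 Y))) := by
    have huv := unit_univ L adj (Arrow.mk (𝟙 Y)) (L.obj (Arrow.mk (𝟙 Y)))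
      (adj.unit.app (Arrow.mk (𝟙 Y)))
    refine huv.unique ?_ (Category.comp_id _)
    show adj.unit.app (Arrow.mk (𝟙 Y)) ≫ ι.map (τ ≫ κ) = adj.unit.app (Arrow.mk (𝟙 Y))
    rw [Functor.map_comp, ← Category.assoc, hτ]
    exact hστ
  exact ⟨τ, hκτ, hτκ⟩

end PartB

section Construct
variable {C : Type u} [Category.{v} C] {R : MorphismProperty C}
  {L : Arrow C ⥤ ObjectProperty.FullSubcategory (fun g : Arrow C => R g.hom)}

lemma isOFS_of_reflective (hR : ∀ (a b : Arrow C), (a ≅ b) → R a.hom → R b.hom)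
    (adj : L ⊣ ObjectProperty.ι (fun g : Arrow C => R g.hom))
    (hU : ∀ g : Arrow C, IsIso ((adj.unit.app g).right))
    (hComp : ∀ {X Y Z : C} (f : X ⟶ Y) (g : Y ⟶ Z), R f → R g → R (f ≫ g)) :
    IsOFS (fun {X Y : C} (f : X ⟶ Y) =>
      ∀ ⦃A B : C⦄ (g : A ⟶ B), R g → LeftOrthogonal f g) R := by
  refine ⟨?_, ?_, ?_, ?_⟩
  · -- retract_left
    intro a b i r hir hb A B g hg
    exact leftOrthogonal_retract i r hir (hb g hg)
  · -- retract_right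
    intro a b i r hir hb
    obtain ⟨Z, e, ra, h1⟩ := exists_reflFact L adj hR hU a.hom
    obtain ⟨Z', e', r', h2⟩ := exists_reflFact L adj hR hU e
    have llp : ∀ {A B : C} (g : A ⟶ B), R g → LeftOrthogonal e g :=
      fun g hg => h1.llp h2 hComp g hg
    have hil : i.left ≫ r.left = 𝟙 a.left := by
      have := congrArg CommaMorphism.left hir; simpa using this
    have hirr : i.right ≫ r.right = 𝟙 a.right := by
      have := congrArg CommaMorphism.right hir; simpa using this
    obtain ⟨hra, hfac, -⟩ := h1
    obtain ⟨d, ⟨hd1, hd2⟩, -⟩ := llp b.hom hb i.left (ra ≫ i.right)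
      (by rw [Arrow.w i, ← hfac, Category.assoc])
    have he1 : e ≫ d ≫ r.left = 𝟙 a.left := by
      rw [← Category.assoc, hd1, hil]
    have uc := llp ra hra e ra rfl
    have he2 : (d ≫ r.left) ≫ e = 𝟙 Z := by
      refine uc.unique ⟨?_, ?_⟩ ⟨by simp, by simp⟩
      · rw [← Category.assoc, he1]; simp
      · rw [Category.assoc, hfac, Category.assoc, Arrow.w r, ← Category.assoc, hd2,
          Category.assoc, hirr]
        simp
    haveI : IsIso e := ⟨d ≫ r.left, he1, he2⟩
    refine hR (Arrow.mk ra) a ?_ hra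
    refine Arrow.isoMk (asIso e).symm (Iso.refl a.right) ?_
    simp [← hfac]
  · -- factor
    intro X Y f
    obtain ⟨Z, e, ra, h1⟩ := exists_reflFact L adj hR hU f
    obtain ⟨Z', e', r', h2⟩ := exists_reflFact L adj hR hU e
    exact ⟨Z, e, ra, fun {A B} g hg => h1.llp h2 hComp g hg, h1.1, h1.2.1⟩
  · -- orth
    intro X Y A B f g hf hg
    exact hf g hg
end Construct

section FromOFS
variable {C : Type u} [Category.{v} C] {LL R : MorphismProperty C}

/-- A chosen diagonal filler. -/
noncomputable def olift {X Y A B : C} {f : X ⟶ Y} {g : A ⟶ B} (h : LeftOrthogonal f g)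
    {u : X ⟶ A} {v : Y ⟶ B} (hsq : u ≫ g = f ≫ v) : Y ⟶ A :=
  (h u v hsq).choose

lemma olift_comm₁ {X Y A B : C} {f : X ⟶ Y} {g : A ⟶ B} (h : LeftOrthogonal f g)
    {u : X ⟶ A} {v : Y ⟶ B} (hsq : u ≫ g = f ≫ v) : f ≫ olift h hsq = u :=
  (h u v hsq).choose_spec.1.1

lemma olift_comm₂ {X Y A B : C} {f : X ⟶ Y} {g : A ⟶ B} (h : LeftOrthogonal f g)
    {u : X ⟶ A} {v : Y ⟶ B} (hsq : u ≫ g = f ≫ v) : olift h hsq ≫ g = v :=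
  (h u v hsq).choose_spec.1.2

lemma olift_unique {X Y A B : C} {f : X ⟶ Y} {g : A ⟶ B} (h : LeftOrthogonal f g)
    {u : X ⟶ A} {v : Y ⟶ B} (hsq : u ≫ g = f ≫ v) {d : Y ⟶ A}
    (hd1 : f ≫ d = u) (hd2 : d ≫ g = v) : d = olift h hsq :=
  (h u v hsq).choose_spec.2 d ⟨hd1, hd2⟩

variable (ofs : IsOFS LL R)

/-- Chosen middle object of the factorization. -/
noncomputable def facZ (a : Arrow C) : C := (ofs.factor a.hom).choose

/-- Chosen left factor. -/
noncomputable def facL (a : Arrow C) : a.left ⟶ facZ ofs a :=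
  (ofs.factor a.hom).choose_spec.choose

/-- Chosen right factor. -/
noncomputable def facR (a : Arrow C) : facZ ofs a ⟶ a.right :=
  (ofs.factor a.hom).choose_spec.choose_spec.choose

lemma facL_mem (a : Arrow C) : LL (facL ofs a) :=
  (ofs.factor a.hom).choose_spec.choose_spec.choose_spec.1

lemma facR_mem (a : Arrow C) : R (facR ofs a) :=
  (ofs.factor a.hom).choose_spec.choose_spec.choose_spec.2.1

lemma fac_comp (a : Arrow C) : facL ofs a ≫ facR ofs a = a.hom :=
  (ofs.factor a.hom).choose_spec.choose_spec.choose_spec.2.2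

/-- The unit-to-be. -/
noncomputable def etaHom (a : Arrow C) : a ⟶ Arrow.mk (facR ofs a) :=
  Arrow.homMk (u := facL ofs a) (v := 𝟙 a.right) (by simp [fac_comp])

@[simp] lemma etaHom_left (a : Arrow C) : (etaHom ofs a).left = facL ofs a := rfl
@[simp] lemma etaHom_right (a : Arrow C) : (etaHom ofs a).right = 𝟙 a.right := rfl

lemma fac_sq2 (a : Arrow C) (G : ObjectProperty.FullSubcategory (fun g : Arrow C => R g.hom))
    (φ : a ⟶ (ObjectProperty.ι (fun g : Arrow C => R g.hom)).obj G) :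
    φ.left ≫ G.obj.hom = facL ofs a ≫ (facR ofs a ≫ φ.right) := by
  rw [← Category.assoc, fac_comp]
  exact Arrow.w φ

/-- The canonical lift against a member of `R`. -/
noncomputable def flift (a : Arrow C) (G : ObjectProperty.FullSubcategory (fun g : Arrow C => R g.hom))
    (φ : a ⟶ (ObjectProperty.ι (fun g : Arrow C => R g.hom)).obj G) :
    facZ ofs a ⟶ G.obj.left :=
  olift (ofs.orth _ _ (facL_mem ofs a) G.property) (fac_sq2 ofs a G φ)

lemma flift_comm₁ (a : Arrow C) (G : ObjectProperty.FullSubcategory (fun g : Arrow C => R g.hom))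
    (φ : a ⟶ (ObjectProperty.ι (fun g : Arrow C => R g.hom)).obj G) :
    facL ofs a ≫ flift ofs a G φ = φ.left :=
  olift_comm₁ _ _

lemma flift_comm₂ (a : Arrow C) (G : ObjectProperty.FullSubcategory (fun g : Arrow C => R g.hom))
    (φ : a ⟶ (ObjectProperty.ι (fun g : Arrow C => R g.hom)).obj G) :
    flift ofs a G φ ≫ G.obj.hom = facR ofs a ≫ φ.right :=
  olift_comm₂ _ _

lemma flift_unique (a : Arrow C) (G : ObjectProperty.FullSubcategory (fun g : Arrow C => R g.hom))
    (φ : a ⟶ (ObjectProperty.ι (fun g : Arrow C => R g.hom)).obj G)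
    {d : facZ ofs a ⟶ G.obj.left}
    (hd1 : facL ofs a ≫ d = φ.left) (hd2 : d ≫ G.obj.hom = facR ofs a ≫ φ.right) :
    d = flift ofs a G φ :=
  olift_unique _ _ hd1 hd2

/-- The underlying square of the reflector's action on morphisms. -/
noncomputable def reflMap {a b : Arrow C} (φ : a ⟶ b) :
    Arrow.mk (facR ofs a) ⟶ Arrow.mk (facR ofs b) :=
  Arrow.homMk (f := Arrow.mk (facR ofs a)) (g := Arrow.mk (facR ofs b))
    (u := flift ofs a ⟨Arrow.mk (facR ofs b), facR_mem ofs b⟩ (φ ≫ etaHom ofs b))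
    (v := φ.right)
    (by
      have h := flift_comm₂ ofs a ⟨Arrow.mk (facR ofs b), facR_mem ofs b⟩ (φ ≫ etaHom ofs b)
      simpa using h)

@[simp] lemma reflMap_left {a b : Arrow C} (φ : a ⟶ b) :
    (reflMap ofs φ).left
      = flift ofs a ⟨Arrow.mk (facR ofs b), facR_mem ofs b⟩ (φ ≫ etaHom ofs b) := rfl

@[simp] lemma reflMap_right {a b : Arrow C} (φ : a ⟶ b) :
    (reflMap ofs φ).right = φ.right := rfl

/-- The reflector onto `R`. -/
noncomputable def reflector : Arrow C ⥤ ObjectProperty.FullSubcategory (fun g : Arrow C => R g.hom) where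
  obj a := ⟨Arrow.mk (facR ofs a), facR_mem ofs a⟩
  map {a b} φ := ObjectProperty.homMk (reflMap ofs φ)
  map_id a := by
    apply ObjectProperty.hom_ext
    refine CommaMorphism.ext ?_ rfl
    exact (flift_unique ofs a ⟨Arrow.mk (facR ofs a), facR_mem ofs a⟩
      (𝟙 a ≫ etaHom ofs a) (d := 𝟙 (facZ ofs a)) (by simp) (by simp)).symm
  map_comp {a b c} φ ψ := by
    apply ObjectProperty.hom_ext
    refine CommaMorphism.ext ?_ rfl
    show (reflMap ofs (φ ≫ ψ)).left = (reflMap ofs φ).left ≫ (reflMap ofs ψ).left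
    refine (flift_unique ofs a ⟨Arrow.mk (facR ofs c), facR_mem ofs c⟩
      ((φ ≫ ψ) ≫ etaHom ofs c) ?_ ?_).symm
    · show facL ofs a ≫
        (flift ofs a ⟨Arrow.mk (facR ofs b), facR_mem ofs b⟩ (φ ≫ etaHom ofs b) ≫
         flift ofs b ⟨Arrow.mk (facR ofs c), facR_mem ofs c⟩ (ψ ≫ etaHom ofs c)) = _
      rw [← Category.assoc, flift_comm₁]
      have h := flift_comm₁ ofs b ⟨Arrow.mk (facR ofs c), facR_mem ofs c⟩ (ψ ≫ etaHom ofs c)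
      simp only [Arrow.comp_left, etaHom_left, Category.assoc, h]
    · show (flift ofs a ⟨Arrow.mk (facR ofs b), facR_mem ofs b⟩ (φ ≫ etaHom ofs b) ≫
         flift ofs b ⟨Arrow.mk (facR ofs c), facR_mem ofs c⟩ (ψ ≫ etaHom ofs c)) ≫
         facR ofs c = _
      rw [Category.assoc]
      have h2 := flift_comm₂ ofs b ⟨Arrow.mk (facR ofs c), facR_mem ofs c⟩ (ψ ≫ etaHom ofs c)
      simp only [Arrow.mk_hom] at h2
      rw [h2]
      have h1 := flift_comm₂ ofs a ⟨Arrow.mk (facR ofs b), facR_mem ofs b⟩ (φ ≫ etaHom ofs b)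
      simp only [Arrow.mk_hom] at h1
      simp only [← Category.assoc]
      rw [h1]
      simp
end FromOFS

section FromOFS2
variable {C : Type u} [Category.{v} C] {LL R : MorphismProperty C} (ofs : IsOFS LL R)

/-- The adjunction between the reflector and the inclusion. -/
noncomputable def reflAdj :
    reflector ofs ⊣ ObjectProperty.ι (fun g : Arrow C => R g.hom) :=
  Adjunction.mkOfHomEquiv
  { homEquiv := fun a G =>
    { toFun := fun ψ =>
        etaHom ofs a ≫ (ObjectProperty.ι (fun g : Arrow C => R g.hom)).map ψ
      invFun := fun φ => ObjectProperty.homMk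
        (Arrow.homMk (f := Arrow.mk (facR ofs a)) (g := G.obj)
          (u := flift ofs a G φ) (v := φ.right) (flift_comm₂ ofs a G φ) :
          Arrow.mk (facR ofs a) ⟶ G.obj)
      left_inv := fun ψ => by
        apply ObjectProperty.hom_ext
        refine CommaMorphism.ext ?_ ?_
        · refine (flift_unique ofs a G
            (etaHom ofs a ≫ (ObjectProperty.ι (fun g : Arrow C => R g.hom)).map ψ)
            (d := ((ObjectProperty.ι (fun g : Arrow C => R g.hom)).map ψ).left)
            rfl ?_).symm
          show ((ObjectProperty.ι (fun g : Arrow C => R g.hom)).map ψ).left ≫ G.obj.hom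
            = facR ofs a ≫ (𝟙 a.right ≫
                ((ObjectProperty.ι (fun g : Arrow C => R g.hom)).map ψ).right)
          refine Eq.trans ?_ (congrArg _ (Category.id_comp _).symm)
          exact Arrow.w ((ObjectProperty.ι (fun g : Arrow C => R g.hom)).map ψ)
        · show (𝟙 a.right) ≫ _ = _
          simp
      right_inv := fun φ => by
        refine CommaMorphism.ext ?_ ?_
        · exact flift_comm₁ ofs a G φ
        · exact Category.id_comp φ.right }
    homEquiv_naturality_left_symm := fun {a' a G} k φ => by
      apply ObjectProperty.hom_ext
      refine CommaMorphism.ext ?_ rfl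
      show _ = (reflMap ofs k).left ≫ flift ofs a G φ
      refine (flift_unique ofs a' G (k ≫ φ) ?_ ?_).symm
      · rw [← Category.assoc]
        show (facL ofs a' ≫
          flift ofs a' ⟨Arrow.mk (facR ofs a), facR_mem ofs a⟩ (k ≫ etaHom ofs a)) ≫
          flift ofs a G φ = _
        rw [flift_comm₁]
        simp only [Arrow.comp_left, etaHom_left, Category.assoc, flift_comm₁]
      · rw [Category.assoc, flift_comm₂ ofs a G φ, ← Category.assoc]
        have h := flift_comm₂ ofs a' ⟨Arrow.mk (facR ofs a), facR_mem ofs a⟩ (k ≫ etaHom ofs a)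
        simp only [Arrow.mk_hom] at h
        show ((reflMap ofs k).left ≫ facR ofs a) ≫ φ.right = _
        rw [reflMap_left, h]
        simp
    homEquiv_naturality_right := fun {a G G'} ψ t => by
      show etaHom ofs a ≫ (ObjectProperty.ι (fun g : Arrow C => R g.hom)).map (ψ ≫ t)
        = (etaHom ofs a ≫ (ObjectProperty.ι (fun g : Arrow C => R g.hom)).map ψ) ≫
          (ObjectProperty.ι (fun g : Arrow C => R g.hom)).map t
      rw [Functor.map_comp]
      exact (Category.assoc _ _ _).symm }

lemma reflAdj_unit_right (a : Arrow C) : ((reflAdj ofs).unit.app a).right = 𝟙 a.right := by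
  have h : (reflAdj ofs).unit.app a
      = etaHom ofs a ≫ (ObjectProperty.ι (fun g : Arrow C => R g.hom)).map
          (𝟙 ((reflector ofs).obj a)) := by
    rw [reflAdj, Adjunction.mkOfHomEquiv_unit_app]
    rfl
  rw [h]
  show 𝟙 a.right ≫ 𝟙 a.right = 𝟙 a.right
  simp

end FromOFS2

section CompClosed
variable {C : Type u} [Category.{v} C] {LL R : MorphismProperty C}

lemma isOFS_comp_closed (ofs : IsOFS LL R) {X Y Z : C} (f : X ⟶ Y) (g : Y ⟶ Z)
    (hf : R f) (hg : R g) : R (f ≫ g) := by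
  obtain ⟨W, l, r, hl, hr, hlr⟩ := ofs.factor (f ≫ g)
  have horth : LeftOrthogonal l (f ≫ g) :=
    leftOrthogonal_comp (ofs.orth _ _ hl hf) (ofs.orth _ _ hl hg)
  obtain ⟨d, ⟨hd1, hd2⟩, -⟩ := horth (𝟙 X) r (by rw [Category.id_comp, hlr])
  refine ofs.retract_right (Arrow.mk (f ≫ g)) (Arrow.mk r)
    (Arrow.homMk (u := l) (v := 𝟙 Z) (by simp [hlr]))
    (Arrow.homMk (u := d) (v := 𝟙 Z) (by simp [hd2])) ?_ hr
  refine CommaMorphism.ext ?_ ?_ <;> simp [hd1]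

end CompClosed


/-- A class of morphisms `R`, closed under isomorphism in the arrow category and regarded as a
full subcategory of the arrow category, is the right class of an orthogonal factorization
system if and only if (1) the inclusion admits a left adjoint (reflector), (2) the target
functor inverts the unit, and (3) `R` is closed under composition.  Moreover, in that case a
morphism `f : X ⟶ Y` is left orthogonal to every member of `R` if and only if the reflector
sends the morphism `(f, 𝟙 Y) : f ⟶ 𝟙 Y` of the arrow category to an isomorphism. -/
theorem stmt1 {C : Type u} [Category.{v} C] (R : MorphismProperty C)
    (hR : ∀ (a b : Arrow C), (a ≅ b) → R a.hom → R b.hom) :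
    ((∃ L : MorphismProperty C, IsOFS L R) ↔
      ((∃ (L : Arrow C ⥤ ObjectProperty.FullSubcategory (fun g : Arrow C => R g.hom))
          (adj : L ⊣ ObjectProperty.ι (fun g : Arrow C => R g.hom)),
          ∀ g : Arrow C, IsIso ((adj.unit.app g).right)) ∧
        (∀ {X Y Z : C} (f : X ⟶ Y) (g : Y ⟶ Z), R f → R g → R (f ≫ g)))) ∧
    (∀ (L : Arrow C ⥤ ObjectProperty.FullSubcategory (fun g : Arrow C => R g.hom))
      (adj : L ⊣ ObjectProperty.ι (fun g : Arrow C => R g.hom)),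
      (∀ g : Arrow C, IsIso ((adj.unit.app g).right)) →
      (∀ {X Y Z : C} (f : X ⟶ Y) (g : Y ⟶ Z), R f → R g → R (f ≫ g)) →
      ∀ {X Y : C} (f : X ⟶ Y),
        ((∀ {A B : C} (g : A ⟶ B), R g → LeftOrthogonal f g) ↔
          IsIso (L.map (Arrow.homMk (u := f) (v := 𝟙 Y) (by simp) :
            Arrow.mk f ⟶ Arrow.mk (𝟙 Y))))) := by
  constructor
  · constructor
    · rintro ⟨LL, ofs⟩
      refine ⟨⟨reflector ofs, reflAdj ofs, ?_⟩, ?_⟩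
      · intro g
        rw [reflAdj_unit_right]
        exact ⟨𝟙 _, by exact Category.comp_id _, by exact Category.comp_id _⟩
      · intro X Y Z f g hf hg
        exact isOFS_comp_closed ofs f g hf hg
    · rintro ⟨⟨L, adj, hU⟩, hComp⟩
      exact ⟨_, isOFS_of_reflective hR adj hU hComp⟩
  · intro L adj hU hComp X Y f
    constructor
    · intro hO
      exact partB_mp adj f hO
    · intro hκ A B g hg
      exact partB_mpr adj f hκ g hg
end

section
/- Let V be a monoidal category equipped with an orthogonal factorization system (L,R) such that the tensor product of any two morphisms in L again lies in L and the tensor product of any two morphisms in R again lies in R. Then the category Mon(V) of monoid objects in V carries an orthogonal factorization system in which a morphism of monoids lies in the left (respectively, right) class precisely when its underlying morphism in V lies in L (respectively, in R); in particular, the forgetful functor Mon(V) → V preserves both classes. -/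
open CategoryTheory MonoidalCategory

universe v u

section Aux

variable {C : Type u} [Category.{v} C] {L R : MorphismProperty C}

/-- In an OFS, every identity lies in the left class. -/
lemma ofs_id_left (h : IsOFS L R) (X : C) : L (𝟙 X) := by
  obtain ⟨Z, l, r, hl, hr, hlr⟩ := h.factor (𝟙 X)
  exact h.retract_left (Arrow.mk (𝟙 X)) (Arrow.mk l)
    (Arrow.homMk (u := 𝟙 X) (v := l) (by simp))
    (Arrow.homMk (u := 𝟙 X) (v := r) (by simp [hlr]))
    (by ext <;> simp [hlr]) hl

/-- In an OFS, every identity lies in the right class. -/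
lemma ofs_id_right (h : IsOFS L R) (X : C) : R (𝟙 X) := by
  obtain ⟨Z, l, r, hl, hr, hlr⟩ := h.factor (𝟙 X)
  exact h.retract_right (Arrow.mk (𝟙 X)) (Arrow.mk r)
    (Arrow.homMk (u := l) (v := 𝟙 X) (by simp [hlr]))
    (Arrow.homMk (u := r) (v := 𝟙 X) (by simp))
    (by ext <;> simp [hlr]) hr

end Aux

open scoped MonObj

set_option maxHeartbeats 1000000 in
/-- If `(L, R)` is an orthogonal factorization system on a monoidal category `V` such that
both classes are stable under tensoring of morphisms, then the category `Mon_ V` of monoid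
objects in `V` carries an orthogonal factorization system whose left (resp. right) class
consists of the morphisms of monoids whose underlying morphism lies in `L` (resp. `R`);
in particular the forgetful functor `Mon_ V ⥤ V` preserves both classes. -/
theorem stmt4 {V : Type u} [Category.{v} V] [MonoidalCategory V]
    (L R : MorphismProperty V) (h : IsOFS L R)
    (hL : ∀ {X Y X' Y' : V} (f : X ⟶ Y) (g : X' ⟶ Y'), L f → L g → L (f ⊗ₘ g))
    (hR : ∀ {X Y X' Y' : V} (f : X ⟶ Y) (g : X' ⟶ Y'), R f → R g → R (f ⊗ₘ g)) :
    IsOFS (C := Mon V)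
      (fun M N f => L (Mon.Hom.hom f))
      (fun M N f => R (Mon.Hom.hom f)) ∧
    ((∀ {M N : Mon V} (f : M ⟶ N), L (Mon.Hom.hom f) → L ((Mon.forget V).map f)) ∧
     (∀ {M N : Mon V} (f : M ⟶ N), R (Mon.Hom.hom f) → R ((Mon.forget V).map f))) := by
  refine ⟨⟨?_, ?_, ?_, ?_⟩, fun f hf => hf, fun f hf => hf⟩
  · -- retract closure, left class
    intro a b i ret hir hb
    exact h.retract_left ((Mon.forget V).mapArrow.obj a) ((Mon.forget V).mapArrow.obj b)
      ((Mon.forget V).mapArrow.map i) ((Mon.forget V).mapArrow.map ret)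
      (by rw [← Functor.map_comp, hir]; exact ((Mon.forget V).mapArrow).map_id a) hb
  · -- retract closure, right class
    intro a b i ret hir hb
    exact h.retract_right ((Mon.forget V).mapArrow.obj a) ((Mon.forget V).mapArrow.obj b)
      ((Mon.forget V).mapArrow.map i) ((Mon.forget V).mapArrow.map ret)
      (by rw [← Functor.map_comp, hir]; exact ((Mon.forget V).mapArrow).map_id a) hb
  · -- factorization
    intro M N f
    obtain ⟨Z, l, r, hl, hr, hlr⟩ := h.factor f.hom
    -- multiplication on Z via orthogonality
    have hsq : (μ[M.X] ≫ l) ≫ r = (l ⊗ₘ l) ≫ ((r ⊗ₘ r) ≫ μ[N.X]) := by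
      rw [Category.assoc, hlr, IsMonHom.mul_hom f.hom, tensorHom_comp_tensorHom_assoc, hlr]
    obtain ⟨mu, ⟨hmu1, hmu2⟩, hmuU⟩ :=
      h.orth (l ⊗ₘ l) r (hL l l hl hl) hr (μ[M.X] ≫ l) ((r ⊗ₘ r) ≫ μ[N.X]) hsq
    -- one_mul
    have honem : ((η[M.X] ≫ l) ▷ Z) ≫ mu = (λ_ Z).hom := by
      have hsq1 : ((λ_ M.X).hom ≫ l) ≫ r =
          (𝟙 (𝟙_ V) ⊗ₘ l) ≫ ((𝟙 (𝟙_ V) ⊗ₘ r) ≫ (λ_ N.X).hom) := by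
        rw [tensorHom_comp_tensorHom_assoc, Category.comp_id, hlr, id_tensorHom,
          leftUnitor_naturality, Category.assoc, hlr]
      obtain ⟨d, -, hdU⟩ :=
        h.orth (𝟙 (𝟙_ V) ⊗ₘ l) r (hL _ _ (ofs_id_left h _) hl) hr _ _ hsq1
      have e1 : (λ_ Z).hom = d := by
        refine hdU _ ⟨?_, ?_⟩
        · rw [id_tensorHom, leftUnitor_naturality]
        · rw [← leftUnitor_naturality, id_tensorHom]
      have e2 : ((η[M.X] ≫ l) ▷ Z) ≫ mu = d := by
        refine hdU _ ⟨?_, ?_⟩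
        · rw [← tensorHom_id (η[M.X] ≫ l) Z, ← Category.assoc, tensorHom_comp_tensorHom,
            Category.id_comp, Category.comp_id]
          have : (η[M.X] ≫ l) ⊗ₘ l = (η[M.X] ⊗ₘ 𝟙 M.X) ≫ (l ⊗ₘ l) := by
            rw [tensorHom_comp_tensorHom, Category.id_comp]
          rw [this, Category.assoc, hmu1, tensorHom_id, MonObj.one_mul_assoc M.X]
        · rw [Category.assoc, hmu2, ← tensorHom_id (η[M.X] ≫ l) Z, tensorHom_comp_tensorHom_assoc,
            Category.assoc, hlr, IsMonHom.one_hom f.hom, Category.id_comp]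
          have : η[N.X] ⊗ₘ r = (𝟙 (𝟙_ V) ⊗ₘ r) ≫ (η[N.X] ⊗ₘ 𝟙 N.X) := by
            rw [tensorHom_comp_tensorHom, Category.id_comp, Category.comp_id]
          rw [this, Category.assoc, tensorHom_id, MonObj.one_mul N.X]
      rw [e2, ← e1]
    -- mul_one
    have hmulo : (Z ◁ (η[M.X] ≫ l)) ≫ mu = (ρ_ Z).hom := by
      have hsq1 : ((ρ_ M.X).hom ≫ l) ≫ r =
          (l ⊗ₘ 𝟙 (𝟙_ V)) ≫ ((r ⊗ₘ 𝟙 (𝟙_ V)) ≫ (ρ_ N.X).hom) := by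
        rw [tensorHom_comp_tensorHom_assoc, Category.comp_id, hlr, tensorHom_id,
          rightUnitor_naturality, Category.assoc, hlr]
      obtain ⟨d, -, hdU⟩ :=
        h.orth (l ⊗ₘ 𝟙 (𝟙_ V)) r (hL _ _ hl (ofs_id_left h _)) hr _ _ hsq1
      have e1 : (ρ_ Z).hom = d := by
        refine hdU _ ⟨?_, ?_⟩
        · rw [tensorHom_id, rightUnitor_naturality]
        · rw [← rightUnitor_naturality, tensorHom_id]
      have e2 : (Z ◁ (η[M.X] ≫ l)) ≫ mu = d := by
        refine hdU _ ⟨?_, ?_⟩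
        · rw [← id_tensorHom Z (η[M.X] ≫ l), ← Category.assoc, tensorHom_comp_tensorHom,
            Category.id_comp, Category.comp_id]
          have : l ⊗ₘ (η[M.X] ≫ l) = (𝟙 M.X ⊗ₘ η[M.X]) ≫ (l ⊗ₘ l) := by
            rw [tensorHom_comp_tensorHom, Category.id_comp]
          rw [this, Category.assoc, hmu1, id_tensorHom, MonObj.mul_one_assoc M.X]
        · rw [Category.assoc, hmu2, ← id_tensorHom Z (η[M.X] ≫ l), tensorHom_comp_tensorHom_assoc,
            Category.assoc, hlr, IsMonHom.one_hom f.hom, Category.id_comp]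
          have : r ⊗ₘ η[N.X] = (r ⊗ₘ 𝟙 (𝟙_ V)) ≫ (𝟙 N.X ⊗ₘ η[N.X]) := by
            rw [tensorHom_comp_tensorHom, Category.id_comp, Category.comp_id]
          rw [this, Category.assoc, id_tensorHom, MonObj.mul_one N.X]
      rw [e2, ← e1]
    -- mul_assoc
    have hassoc : (mu ▷ Z) ≫ mu = (α_ Z Z Z).hom ≫ (Z ◁ mu) ≫ mu := by
      have hsq1 : ((μ[M.X] ▷ M.X) ≫ μ[M.X] ≫ l) ≫ r =
          ((l ⊗ₘ l) ⊗ₘ l) ≫ (((r ⊗ₘ r) ⊗ₘ r) ≫ (μ[N.X] ▷ N.X) ≫ μ[N.X]) := by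
        calc ((μ[M.X] ▷ M.X) ≫ μ[M.X] ≫ l) ≫ r
            = (μ[M.X] ⊗ₘ 𝟙 M.X) ≫ μ[M.X] ≫ f.hom := by
              rw [tensorHom_id]; simp only [Category.assoc]; rw [hlr]
          _ = (μ[M.X] ⊗ₘ 𝟙 M.X) ≫ (f.hom ⊗ₘ f.hom) ≫ μ[N.X] := by rw [IsMonHom.mul_hom f.hom]
          _ = ((μ[M.X] ≫ f.hom) ⊗ₘ f.hom) ≫ μ[N.X] := by
              rw [tensorHom_comp_tensorHom_assoc, Category.id_comp]
          _ = (((f.hom ⊗ₘ f.hom) ≫ μ[N.X]) ⊗ₘ (f.hom ≫ 𝟙 N.X)) ≫ μ[N.X] := by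
              rw [IsMonHom.mul_hom f.hom, Category.comp_id]
          _ = ((f.hom ⊗ₘ f.hom) ⊗ₘ f.hom) ≫ (μ[N.X] ⊗ₘ 𝟙 N.X) ≫ μ[N.X] := by
              rw [← tensorHom_comp_tensorHom_assoc]
          _ = ((l ⊗ₘ l) ⊗ₘ l) ≫ (((r ⊗ₘ r) ⊗ₘ r) ≫ (μ[N.X] ▷ N.X) ≫ μ[N.X]) := by
              rw [← hlr, ← tensorHom_comp_tensorHom, ← tensorHom_comp_tensorHom, tensorHom_id, Category.assoc]
      obtain ⟨d, -, hdU⟩ :=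
        h.orth ((l ⊗ₘ l) ⊗ₘ l) r (hL _ _ (hL l l hl hl) hl) hr _ _ hsq1
      have e1 : (mu ▷ Z) ≫ mu = d := by
        refine hdU _ ⟨?_, ?_⟩
        · rw [← tensorHom_id mu Z, ← Category.assoc, tensorHom_comp_tensorHom, hmu1, Category.comp_id]
          have : (μ[M.X] ≫ l) ⊗ₘ l = (μ[M.X] ⊗ₘ 𝟙 M.X) ≫ (l ⊗ₘ l) := by
            rw [tensorHom_comp_tensorHom, Category.id_comp]
          rw [this, Category.assoc, hmu1, tensorHom_id]
        · calc ((mu ▷ Z) ≫ mu) ≫ r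
              = (mu ⊗ₘ 𝟙 Z) ≫ (r ⊗ₘ r) ≫ μ[N.X] := by
                rw [tensorHom_id, Category.assoc, hmu2]
            _ = ((mu ≫ r) ⊗ₘ (𝟙 Z ≫ r)) ≫ μ[N.X] := by rw [tensorHom_comp_tensorHom_assoc]
            _ = (((r ⊗ₘ r) ≫ μ[N.X]) ⊗ₘ r) ≫ μ[N.X] := by rw [hmu2, Category.id_comp]
            _ = ((r ⊗ₘ r) ⊗ₘ r) ≫ (μ[N.X] ▷ N.X) ≫ μ[N.X] := by
                rw [← tensorHom_id μ[N.X] N.X, tensorHom_comp_tensorHom_assoc, Category.comp_id]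
      have hcomm : (Z ◁ mu) ≫ (r ⊗ₘ r) = (r ⊗ₘ (r ⊗ₘ r)) ≫ (N.X ◁ μ[N.X]) := by
        rw [← id_tensorHom Z mu, ← id_tensorHom N.X μ[N.X], tensorHom_comp_tensorHom, tensorHom_comp_tensorHom,
          Category.id_comp, Category.comp_id, hmu2]
      have hcomm' : (l ⊗ₘ (l ⊗ₘ l)) ≫ (Z ◁ mu) = (M.X ◁ μ[M.X]) ≫ (l ⊗ₘ l) := by
        rw [← id_tensorHom Z mu, ← id_tensorHom M.X μ[M.X], tensorHom_comp_tensorHom, tensorHom_comp_tensorHom,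
          Category.id_comp, Category.comp_id, hmu1]
      have e2 : (α_ Z Z Z).hom ≫ (Z ◁ mu) ≫ mu = d := by
        refine hdU _ ⟨?_, ?_⟩
        · calc ((l ⊗ₘ l) ⊗ₘ l) ≫ (α_ Z Z Z).hom ≫ (Z ◁ mu) ≫ mu
              = (α_ M.X M.X M.X).hom ≫ (l ⊗ₘ (l ⊗ₘ l)) ≫ (Z ◁ mu) ≫ mu := by
                rw [associator_naturality_assoc]
            _ = (α_ M.X M.X M.X).hom ≫ (M.X ◁ μ[M.X]) ≫ (l ⊗ₘ l) ≫ mu := by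
                rw [← Category.assoc (l ⊗ₘ (l ⊗ₘ l)), hcomm', Category.assoc]
            _ = (α_ M.X M.X M.X).hom ≫ (M.X ◁ μ[M.X]) ≫ μ[M.X] ≫ l := by rw [hmu1]
            _ = (μ[M.X] ▷ M.X) ≫ μ[M.X] ≫ l := by rw [MonObj.mul_assoc_assoc M.X]
        · calc ((α_ Z Z Z).hom ≫ (Z ◁ mu) ≫ mu) ≫ r
              = (α_ Z Z Z).hom ≫ (Z ◁ mu) ≫ (r ⊗ₘ r) ≫ μ[N.X] := by
                simp only [Category.assoc]; rw [hmu2]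
            _ = (α_ Z Z Z).hom ≫ (r ⊗ₘ (r ⊗ₘ r)) ≫ (N.X ◁ μ[N.X]) ≫ μ[N.X] := by
                rw [← Category.assoc (Z ◁ mu), hcomm, Category.assoc]
            _ = ((r ⊗ₘ r) ⊗ₘ r) ≫ (α_ N.X N.X N.X).hom ≫ (N.X ◁ μ[N.X]) ≫ μ[N.X] := by
                rw [← associator_naturality_assoc]
            _ = ((r ⊗ₘ r) ⊗ₘ r) ≫ (μ[N.X] ▷ N.X) ≫ μ[N.X] := by rw [← MonObj.mul_assoc N.X]
      rw [e1, ← e2]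
    letI : MonObj Z :=
      { one := η[M.X] ≫ l, mul := mu,
        one_mul := honem, mul_one := hmulo, mul_assoc := hassoc }
    let Zmon : Mon V := ⟨Z⟩
    have hrone : η[Zmon.X] ≫ r = η[N.X] := by
      show (η[M.X] ≫ l) ≫ r = η[N.X]
      rw [Category.assoc, hlr, IsMonHom.one_hom f.hom]
    refine ⟨Zmon, Mon.Hom.mk' (M := M) (N := Zmon) l rfl hmu1.symm,
            Mon.Hom.mk' (M := Zmon) (N := N) r hrone hmu2, hl, hr, ?_⟩
    exact Mon.Hom.ext hlr
  · -- orthogonality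
    intro M N A B f g hf hg u v hsq
    have hsq' : u.hom ≫ g.hom = f.hom ≫ v.hom := by
      have := congrArg Mon.Hom.hom hsq
      simpa using this
    obtain ⟨d, ⟨hd1, hd2⟩, hdU⟩ := h.orth f.hom g.hom hf hg u.hom v.hom hsq'
    have done : η[N.X] ≫ d = η[A.X] := by
      rw [← IsMonHom.one_hom f.hom, Category.assoc, hd1, IsMonHom.one_hom u.hom]
    have dmul : μ[N.X] ≫ d = (d ⊗ₘ d) ≫ μ[A.X] := by
      have hsq2 : ((f.hom ⊗ₘ f.hom) ≫ μ[N.X]) ≫ d ≫ g.hom =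
          (f.hom ⊗ₘ f.hom) ≫ (μ[N.X] ≫ d) ≫ g.hom := by simp
      have hsqm : (μ[M.X] ≫ u.hom) ≫ g.hom = (f.hom ⊗ₘ f.hom) ≫ (μ[N.X] ≫ v.hom) := by
        rw [Category.assoc, hsq', IsMonHom.mul_hom_assoc f.hom]
      obtain ⟨e, -, heU⟩ :=
        h.orth (f.hom ⊗ₘ f.hom) g.hom (hL _ _ hf hf) hg _ _ hsqm
      have e1 : μ[N.X] ≫ d = e := by
        refine heU _ ⟨?_, ?_⟩
        · rw [← IsMonHom.mul_hom_assoc f.hom, hd1]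
        · rw [Category.assoc, hd2]
      have e2 : (d ⊗ₘ d) ≫ μ[A.X] = e := by
        refine heU _ ⟨?_, ?_⟩
        · rw [tensorHom_comp_tensorHom_assoc, hd1, IsMonHom.mul_hom u.hom]
        · rw [Category.assoc, IsMonHom.mul_hom g.hom, tensorHom_comp_tensorHom_assoc, hd2, ← IsMonHom.mul_hom v.hom]
      rw [e1, ← e2]
    refine ⟨Mon.Hom.mk' (M := N) (N := A) d done dmul, ⟨?_, ?_⟩, ?_⟩
    · ext; exact hd1
    · ext; exact hd2
    · intro d' ⟨hd'1, hd'2⟩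
      ext
      exact hdU d'.hom ⟨by rw [← Mon.comp_hom', hd'1], by rw [← Mon.comp_hom', hd'2]⟩
end

section
/- Let F : C ⇄ C' : G be an adjunction of categories (F left adjoint to G), let (L,R) be an orthogonal factorization system on C, and let (L',R') be an orthogonal factorization system on C' whose right class is R' = { g a morphism of C' : G(g) ∈ R }. If every morphism in R is the image under G of some morphism in R', then a morphism f of C lies in L if and only if F(f) lies in L'. -/
open CategoryTheory

universe v₁ u₁ v₂ u₂ v u

/-- A morphism left orthogonal to every morphism of `R` lies in `L`. -/
lemma detect {C : Type u} [Category.{v} C] {L R : MorphismProperty C} (h : IsOFS L R)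
    {X Y : C} (f : X ⟶ Y) (hf : ∀ {A B : C} (g : A ⟶ B), R g → LeftOrthogonal f g) : L f := by
  obtain ⟨Z, l, r, hl, hr, hlr⟩ := h.factor f
  obtain ⟨d, ⟨hd1, hd2⟩, -⟩ := hf r hr l (𝟙 Y) (by simp [hlr])
  refine h.retract_left (Arrow.mk f) (Arrow.mk l)
    (Arrow.homMk (u := 𝟙 X) (v := d) (by simpa using hd1.symm))
    (Arrow.homMk (u := 𝟙 X) (v := r) (by simpa using hlr.symm)) ?_ hl
  ext
  · simp
  · simpa using hd2

/-- Orthogonality transposes across an adjunction. -/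
lemma transpose {C : Type u₁} [Category.{v₁} C] {C' : Type u₂} [Category.{v₂} C']
    {F : C ⥤ C'} {G : C' ⥤ C} (adj : F ⊣ G) {X Y : C} {A B : C'}
    (f : X ⟶ Y) (g : A ⟶ B) :
    LeftOrthogonal (F.map f) g ↔ LeftOrthogonal f (G.map g) := by
  constructor
  · intro ho u v sq
    obtain ⟨d, ⟨hd1, hd2⟩, hu⟩ := ho ((adj.homEquiv X A).symm u) ((adj.homEquiv Y B).symm v)
      (by rw [← adj.homEquiv_naturality_right_symm, ← adj.homEquiv_naturality_left_symm, sq])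
    refine ⟨adj.homEquiv Y A d, ⟨?_, ?_⟩, ?_⟩
    · rw [← adj.homEquiv_naturality_left, hd1, Equiv.apply_symm_apply]
    · rw [← adj.homEquiv_naturality_right, hd2, Equiv.apply_symm_apply]
    · intro e ⟨he1, he2⟩
      have := hu ((adj.homEquiv Y A).symm e) ⟨?_, ?_⟩
      · rw [← this, Equiv.apply_symm_apply]
      · rw [← adj.homEquiv_naturality_left_symm, he1]
      · rw [← adj.homEquiv_naturality_right_symm, he2]
  · intro ho u v sq
    obtain ⟨d, ⟨hd1, hd2⟩, hu⟩ := ho (adj.homEquiv X A u) (adj.homEquiv Y B v)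
      (by rw [← adj.homEquiv_naturality_right, ← adj.homEquiv_naturality_left, sq])
    refine ⟨(adj.homEquiv Y A).symm d, ⟨?_, ?_⟩, ?_⟩
    · rw [← adj.homEquiv_naturality_left_symm, hd1, Equiv.symm_apply_apply]
    · rw [← adj.homEquiv_naturality_right_symm, hd2, Equiv.symm_apply_apply]
    · intro e ⟨he1, he2⟩
      have := hu (adj.homEquiv Y A e) ⟨?_, ?_⟩
      · rw [← this, Equiv.symm_apply_apply]
      · rw [← adj.homEquiv_naturality_left, he1]
      · rw [← adj.homEquiv_naturality_right, he2]

/-- Orthogonality is invariant under isomorphism of the right arrow. -/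
lemma iso_invar {C : Type u} [Category.{v} C] {X Y : C} (f : X ⟶ Y)
    (a b : Arrow C) (e : a ≅ b) (ho : LeftOrthogonal f a.hom) : LeftOrthogonal f b.hom := by
  have hL : e.inv.left ≫ e.hom.left = 𝟙 _ := by rw [← Arrow.comp_left, e.inv_hom_id]; rfl
  have hL' : e.hom.left ≫ e.inv.left = 𝟙 _ := by rw [← Arrow.comp_left, e.hom_inv_id]; rfl
  have hR : e.inv.right ≫ e.hom.right = 𝟙 _ := by rw [← Arrow.comp_right, e.inv_hom_id]; rfl
  intro u v sq
  obtain ⟨d, ⟨hd1, hd2⟩, hu⟩ := ho (u ≫ e.inv.left) (v ≫ e.inv.right)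
    (by rw [Category.assoc, Arrow.w, ← Category.assoc, sq, Category.assoc])
  refine ⟨d ≫ e.hom.left, ⟨?_, ?_⟩, ?_⟩
  · rw [← Category.assoc, hd1, Category.assoc, hL]; simp
  · rw [Category.assoc, Arrow.w, ← Category.assoc, hd2, Category.assoc, hR]; simp
  · intro e' ⟨he1, he2⟩
    have := hu (e' ≫ e.inv.left) ⟨?_, ?_⟩
    · rw [← this, Category.assoc, hL]; simp
    · rw [← Category.assoc, he1]
    · rw [Category.assoc, Arrow.w, ← Category.assoc, he2]

/-- Let `F ⊣ G` be an adjunction, `(L, R)` an orthogonal factorization system on `C` and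
`(L', R')` an orthogonal factorization system on `C'` whose right class consists precisely of
the morphisms sent by `G` into `R`.  If every morphism of `R` is (up to isomorphism in the
arrow category) the image under `G` of a morphism of `R'`, then a morphism `f` of `C` lies in
`L` if and only if `F.map f` lies in `L'`. -/
theorem stmt5 {C : Type u₁} [Category.{v₁} C] {C' : Type u₂} [Category.{v₂} C']
    (F : C ⥤ C') (G : C' ⥤ C) (adj : F ⊣ G)
    (L R : MorphismProperty C) (h : IsOFS L R)
    (L' R' : MorphismProperty C') (h' : IsOFS L' R')
    (hR' : ∀ {X' Y' : C'} (g : X' ⟶ Y'), R' g ↔ R (G.map g))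
    (hsurj : ∀ {X Y : C} (f : X ⟶ Y), R f →
      ∃ g : Arrow C', R' g.hom ∧ Nonempty (G.mapArrow.obj g ≅ Arrow.mk f)) :
    ∀ {X Y : C} (f : X ⟶ Y), L f ↔ L' (F.map f) := by
  intro X Y f
  constructor
  · intro hf
    refine detect h' (F.map f) fun g' hg' => ?_
    exact (transpose adj f g').mpr (h.orth f (G.map g') hf ((hR' g').mp hg'))
  · intro hf
    refine detect h f fun g hg => ?_
    obtain ⟨ga, hga, ⟨e⟩⟩ := hsurj g hg
    exact iso_invar f (G.mapArrow.obj ga) (Arrow.mk g) e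
      ((transpose adj f ga.hom).mp (h'.orth (F.map f) ga.hom hf hga))
end

section
/- Let S be a category and F : S ⥤ Cat a functor such that each category F(s) is equipped with an orthogonal factorization system (L_s, R_s), and such that for every morphism f : s → s' in S the transition functor F(f) carries L_s into L_{s'} and R_s into R_{s'}. Then the Grothendieck construction ∫F carries an orthogonal factorization system in which a morphism (f, φ) : (s,x) → (s',x') (where f : s → s' in S and φ : F(f)(x) → x' in F(s')) lies in the left class precisely when φ ∈ L_{s'}, and lies in the right class precisely when f is an isomorphism in S and φ ∈ R_{s'}. -/
open CategoryTheory

universe v₂ u₂ v₁ u₁ v u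

lemma eqToHom_self {C : Type u} [Category.{v} C] {X : C} (h : X = X) :
    eqToHom h = 𝟙 X := eqToHom_refl X h

lemma eqToHom_chain3_id {C : Type u} [Category.{v} C] {X Y Z : C} (p : X = Y) (q : Y = Z)
    (r : Z = X) : eqToHom p ≫ eqToHom q ≫ eqToHom r = 𝟙 X := by
  subst p q; simp

lemma eqToHom_chain4_id {C : Type u} [Category.{v} C] {X Y Z W : C} (p : X = Y) (q : Y = Z)
    (r : Z = W) (t : W = X) : eqToHom p ≫ eqToHom q ≫ eqToHom r ≫ eqToHom t = 𝟙 X := by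
  subst p q r; simp

lemma eqToHom_chain2_comp {C : Type u} [Category.{v} C] {X Y Z V : C} (p : X = Y) (q : Y = Z)
    (s : X = Z) (f : Z ⟶ V) : eqToHom p ≫ eqToHom q ≫ f = eqToHom s ≫ f := by
  subst p q; simp

lemma eqToHom_chain3_comp {C : Type u} [Category.{v} C] {X Y Z W V : C} (p : X = Y) (q : Y = Z)
    (r : Z = W) (s : X = W) (f : W ⟶ V) : eqToHom p ≫ eqToHom q ≫ eqToHom r ≫ f = eqToHom s ≫ f := by
  subst p q r; simp

lemma eqToHom_chain3_cancel {C : Type u} [Category.{v} C] {X Y Z V : C} (p : X = Y) (q : Y = Z)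
    (r : Z = X) (f : X ⟶ V) : eqToHom p ≫ eqToHom q ≫ eqToHom r ≫ f = f := by
  subst p q; simp

lemma prop_conj' {C : Type u} [Category.{v} C] (P : MorphismProperty C) {X X' Y : C}
    (h : X' = X) {f : X ⟶ Y} (hf : P f) : P (eqToHom h ≫ f) := by
  subst h; simpa using hf

lemma map_map_bridge {S : Type u₁} [Category.{v₁} S] (F : S ⥤ Cat.{v₂, u₂})
    {s t r : S} (f : s ⟶ t) (g : t ⟶ r) {x y : F.obj s} (φ : x ⟶ y) :
    (F.map g).toFunctor.map ((F.map f).toFunctor.map φ) =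
      eqToHom (by simp) ≫ (F.map (f ≫ g)).toFunctor.map φ ≫ eqToHom (by simp) := by
  have := Functor.congr_hom (congrArg Cat.Hom.toFunctor (F.map_comp f g)).symm φ
  simpa using this

lemma fiber_retract {S : Type u₁} [Category.{v₁} S] {F : S ⥤ Cat.{v₂, u₂}}
    (P : ∀ s : S, MorphismProperty (F.obj s))
    (hret : ∀ (s : S) (a b : Arrow (F.obj s)) (i : a ⟶ b) (r : b ⟶ a),
      i ≫ r = 𝟙 a → P s b.hom → P s a.hom)
    (hP : ∀ {s s' : S} (f : s ⟶ s') {x y : F.obj s} (φ : x ⟶ y), P s φ → P s' ((F.map f).toFunctor.map φ))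
    (a b : Arrow (Grothendieck F)) (i : a ⟶ b) (r : b ⟶ a) (hir : i ≫ r = 𝟙 a)
    (hb : P b.right.base b.hom.fiber) : P a.right.base a.hom.fiber := by
  have h1 : i.left ≫ r.left = 𝟙 a.left := by rw [← Arrow.comp_left, hir]; rfl
  have h2 : i.right ≫ r.right = 𝟙 a.right := by rw [← Arrow.comp_right, hir]; rfl
  have hb1 : i.left.base ≫ r.left.base = 𝟙 a.left.base := by
    rw [← Grothendieck.comp_base, h1]; rfl
  have hb2 : i.right.base ≫ r.right.base = 𝟙 a.right.base := by
    rw [← Grothendieck.comp_base, h2]; rfl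
  have hwi : i.left ≫ b.hom = a.hom ≫ i.right := Arrow.w i
  have hwr : r.left ≫ a.hom = b.hom ≫ r.right := Arrow.w r
  have hbi : i.left.base ≫ b.hom.base = a.hom.base ≫ i.right.base := by
    rw [← Grothendieck.comp_base, hwi]; rfl
  have hbr : r.left.base ≫ a.hom.base = b.hom.base ≫ r.right.base := by
    rw [← Grothendieck.comp_base, hwr]; rfl
  have e₁ : i.left.base ≫ b.hom.base ≫ r.right.base = a.hom.base := by
    rw [← Category.assoc, hbi, Category.assoc, hb2]; simp
  have hf1 := Grothendieck.congr h1
  have hf2 := Grothendieck.congr h2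
  have hfi := Grothendieck.congr hwi
  have hfr := Grothendieck.congr hwr
  simp only [Grothendieck.comp_fiber, Grothendieck.id_fiber] at hf1 hf2 hfi hfr
  have h₁ : (F.map a.hom.base).toFunctor.obj a.left.fiber
      = (F.map r.right.base).toFunctor.obj ((F.map b.hom.base).toFunctor.obj ((F.map i.left.base).toFunctor.obj a.left.fiber)) := by
    rw [← e₁]; simp
  have h₂ : a.right.fiber = (F.map r.right.base).toFunctor.obj ((F.map i.right.base).toFunctor.obj a.right.fiber) := by
    have := Functor.congr_obj (congrArg Cat.Hom.toFunctor <| show F.map (i.right.base ≫ r.right.base) = 𝟙 (F.obj a.right.base) by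
      rw [hb2, F.map_id]) a.right.fiber
    simp only [F.map_comp, Cat.Hom.comp_obj, Cat.Hom.id_obj] at this
    exact this.symm
  have h₃ : (F.map r.right.base).toFunctor.obj ((F.map b.hom.base).toFunctor.obj b.left.fiber)
      = (F.map a.hom.base).toFunctor.obj ((F.map r.left.base).toFunctor.obj b.left.fiber) := by
    have := Functor.congr_obj (congrArg Cat.Hom.toFunctor <| show F.map (b.hom.base ≫ r.right.base) = F.map (r.left.base ≫ a.hom.base) by
      rw [hbr]) b.left.fiber
    simp only [F.map_comp, Cat.Hom.comp_obj] at this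
    exact this
  refine hret a.right.base (Arrow.mk a.hom.fiber) (Arrow.mk ((F.map r.right.base).toFunctor.map b.hom.fiber))
    (Arrow.homMk (u := eqToHom h₁ ≫ (F.map r.right.base).toFunctor.map ((F.map b.hom.base).toFunctor.map i.left.fiber))
      (v := eqToHom h₂ ≫ (F.map r.right.base).toFunctor.map i.right.fiber) ?_)
    (Arrow.homMk (u := eqToHom h₃ ≫ (F.map a.hom.base).toFunctor.map r.left.fiber) (v := r.right.fiber) ?_)
    ?_ (hP r.right.base b.hom.fiber hb)
  · have key := congrArg (F.map r.right.base).toFunctor.map hfi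
    simp only [Functor.map_comp, eqToHom_map] at key
    rw [map_map_bridge F i.right.base r.right.base a.hom.fiber] at key
    rw [Functor.congr_hom (congrArg Cat.Hom.toFunctor <| show F.map (i.right.base ≫ r.right.base) = 𝟙 (F.obj a.right.base) by
      rw [hb2, F.map_id]) a.hom.fiber] at key
    simp only [Cat.Hom.id_map, Category.assoc, eqToHom_trans, eqToHom_trans_assoc] at key
    rw [eqToHom_comp_iff] at key
    show (eqToHom h₁ ≫ _) ≫ _ = _
    simp only [Arrow.mk_hom, Category.assoc]
    rw [key]
    simp only [eqToHom_trans_assoc]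
    rw [eqToHom_self, Category.id_comp]
  · show (eqToHom h₃ ≫ _) ≫ _ = _
    rw [eqToHom_comp_iff] at hfr
    simp only [Arrow.mk_hom, Category.assoc]
    rw [hfr]
    simp only [eqToHom_trans_assoc]
    rw [eqToHom_self, Category.id_comp]
  · apply CommaMorphism.ext
    · show (eqToHom h₁ ≫ _) ≫ (eqToHom h₃ ≫ _) = _
      have key := congrArg (F.map a.hom.base).toFunctor.map hf1
      simp only [Functor.map_comp, eqToHom_map] at key
      rw [map_map_bridge F r.left.base a.hom.base i.left.fiber] at key
      rw [map_map_bridge F b.hom.base r.right.base i.left.fiber]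
      rw [Functor.congr_hom (congrArg Cat.Hom.toFunctor <| show F.map (b.hom.base ≫ r.right.base) = F.map (r.left.base ≫ a.hom.base) by rw [hbr]) i.left.fiber]
      simp only [Category.assoc, eqToHom_trans, eqToHom_trans_assoc] at key ⊢
      rw [eqToHom_comp_iff] at key
      rw [key]
      simp
      exact eqToHom_chain3_id _ _ _
    · show (eqToHom h₂ ≫ (F.map r.right.base).toFunctor.map i.right.fiber) ≫ r.right.fiber = _
      rw [eqToHom_comp_iff] at hf2
      simp only [Category.assoc]
      rw [hf2]
      simp
      exact eqToHom_chain4_id _ _ _ _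

/-- Given `F : S ⥤ Cat` with an orthogonal factorization system `(L s, R s)` on each fiber
`F.obj s`, preserved by all transition functors, the Grothendieck construction carries an
orthogonal factorization system: a morphism `(f, φ)` lies in the left class iff `φ` lies in
the left class of the target fiber, and in the right class iff `f` is an isomorphism and `φ`
lies in the right class of the target fiber. -/
theorem stmt7 {S : Type u₁} [Category.{v₁} S] (F : S ⥤ Cat.{v₂, u₂})
    (L R : ∀ s : S, MorphismProperty (F.obj s))
    (hOFS : ∀ s : S, IsOFS (L s) (R s))
    (hL : ∀ {s s' : S} (f : s ⟶ s') {x y : F.obj s} (φ : x ⟶ y),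
      L s φ → L s' ((F.map f).toFunctor.map φ))
    (hR : ∀ {s s' : S} (f : s ⟶ s') {x y : F.obj s} (φ : x ⟶ y),
      R s φ → R s' ((F.map f).toFunctor.map φ)) :
    IsOFS (C := Grothendieck F)
      (fun X Y f => L Y.base (Grothendieck.Hom.fiber f))
      (fun X Y f => IsIso (Grothendieck.Hom.base f) ∧ R Y.base (Grothendieck.Hom.fiber f)) := by
  constructor
  · -- retract closure for L
    intro a b i r hir hb
    exact fiber_retract L (fun s => (hOFS s).retract_left) hL a b i r hir hb
  · -- retract closure for R
    intro a b i r hir hb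
    constructor
    · -- base is iso
      have hb1 : i.left.base ≫ r.left.base = 𝟙 a.left.base := by
        rw [← Grothendieck.comp_base, show i.left ≫ r.left = 𝟙 a.left by
          rw [← Arrow.comp_left, hir]; rfl]; rfl
      have hb2 : i.right.base ≫ r.right.base = 𝟙 a.right.base := by
        rw [← Grothendieck.comp_base, show i.right ≫ r.right = 𝟙 a.right by
          rw [← Arrow.comp_right, hir]; rfl]; rfl
      have hbi : i.left.base ≫ b.hom.base = a.hom.base ≫ i.right.base := by
        rw [← Grothendieck.comp_base, Arrow.w i]; rfl
      have hbr : r.left.base ≫ a.hom.base = b.hom.base ≫ r.right.base := by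
        rw [← Grothendieck.comp_base, Arrow.w r]; rfl
      haveI := hb.1
      refine ⟨i.right.base ≫ inv b.hom.base ≫ r.left.base, ?_, ?_⟩
      · rw [← Category.assoc, ← hbi, Category.assoc, IsIso.hom_inv_id_assoc, hb1]
      · simp only [Category.assoc]
        rw [hbr, IsIso.inv_hom_id_assoc, hb2]
    · exact fiber_retract R (fun s => (hOFS s).retract_right) hR a b i r hir hb.2
  · -- factorization
    intro X Y h
    obtain ⟨Z, l, r, hl, hr, hlr⟩ := (hOFS Y.base).factor h.fiber
    refine ⟨⟨Y.base, Z⟩, ⟨h.base, l⟩, ⟨𝟙 Y.base, eqToHom (by simp) ≫ r⟩, hl,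
      ⟨inferInstance, prop_conj' _ _ hr⟩, ?_⟩
    refine Grothendieck.ext _ _ (by simp) ?_
    simp only [Grothendieck.comp_fiber]
    rw [Functor.congr_hom (congrArg Cat.Hom.toFunctor (F.map_id Y.base)) l]
    simp [hlr, Cat.Hom.id_map]
    exact eqToHom_chain3_cancel _ _ _ _
  · -- orthogonality
    intro X Y A B f g hf hg u v hsq
    haveI : IsIso g.base := hg.1
    haveI : IsIso (F.map g.base) := inferInstance
    haveI : (F.map g.base).toFunctor.IsEquivalence :=
      (Cat.equivOfIso (asIso (F.map g.base))).isEquivalence_functor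
    have hbase : u.base ≫ g.base = f.base ≫ v.base := by
      rw [← Grothendieck.comp_base, hsq]; rfl
    have hfd : f.base ≫ v.base ≫ inv g.base = u.base := by
      rw [← Category.assoc, ← hbase, Category.assoc, IsIso.hom_inv_id, Category.comp_id]
    have hdg : (v.base ≫ inv g.base) ≫ g.base = v.base := by simp
    have hsqf := Grothendieck.congr hsq
    simp only [Grothendieck.comp_fiber] at hsqf
    have hα : (F.map (u.base ≫ g.base)).toFunctor.obj X.fiber
        = (F.map v.base).toFunctor.obj ((F.map f.base).toFunctor.obj X.fiber) := by rw [hbase]; simp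
    have hβ : (F.map (u.base ≫ g.base)).toFunctor.obj X.fiber
        = (F.map g.base).toFunctor.obj ((F.map u.base).toFunctor.obj X.fiber) := by simp
    have hl' : L B.base (eqToHom hα ≫ (F.map v.base).toFunctor.map f.fiber) :=
      prop_conj' _ _ (hL v.base f.fiber hf)
    have hsq' : (eqToHom hβ ≫ (F.map g.base).toFunctor.map u.fiber) ≫ g.fiber
        = (eqToHom hα ≫ (F.map v.base).toFunctor.map f.fiber) ≫ v.fiber := by
      simp only [Category.assoc]
      rw [eqToHom_comp_iff] at hsqf ⊢
      rw [hsqf]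
      simp
      exact eqToHom_chain3_comp _ _ _ _ _
    obtain ⟨d', ⟨hd1, hd2⟩, hduniq⟩ := (hOFS B.base).orth _ _ hl' hg.2
      (eqToHom hβ ≫ (F.map g.base).toFunctor.map u.fiber) v.fiber hsq'
    have hγ : (F.map g.base).toFunctor.obj ((F.map (v.base ≫ inv g.base)).toFunctor.obj Y.fiber)
        = (F.map v.base).toFunctor.obj Y.fiber := by
      have h := Functor.congr_obj (congrArg Cat.Hom.toFunctor <| show F.map (v.base ≫ inv g.base) ≫ F.map g.base = F.map v.base by
        rw [← F.map_comp, hdg]) Y.fiber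
      simp only [Cat.Hom.comp_obj] at h
      exact h
    set δ := (F.map g.base).toFunctor.preimage (eqToHom hγ ≫ d') with hδdef
    have hδ : (F.map g.base).toFunctor.map δ = eqToHom hγ ≫ d' := (F.map g.base).toFunctor.map_preimage _
    refine ⟨⟨v.base ≫ inv g.base, δ⟩, ⟨?_, ?_⟩, ?_⟩
    · -- f ≫ d = u
      refine Grothendieck.ext _ _ hfd ?_
      apply (F.map g.base).toFunctor.map_injective
      simp only [Grothendieck.comp_fiber, Functor.map_comp, eqToHom_map, hδ]
      rw [map_map_bridge F (v.base ≫ inv g.base) g.base f.fiber]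
      rw [Functor.congr_hom (congrArg Cat.Hom.toFunctor <| show F.map ((v.base ≫ inv g.base) ≫ g.base) = F.map v.base by
        rw [hdg]) f.fiber]
      rw [Category.assoc, eqToHom_comp_iff] at hd1
      simp only [Category.assoc, eqToHom_trans_assoc, eqToHom_trans]
      rw [eqToHom_self, Category.id_comp, hd1]
      simp
    · -- d ≫ g = v
      refine Grothendieck.ext _ _ hdg ?_
      simp only [Grothendieck.comp_fiber, hδ]
      simp only [Category.assoc, eqToHom_trans_assoc]
      simpa using hd2
    · -- uniqueness
      rintro ⟨db, df⟩ ⟨hA2, hB2⟩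
      have hdb : db = v.base ≫ inv g.base := by
        have h := congrArg Grothendieck.Hom.base hB2
        simp only [Grothendieck.comp_base] at h
        rw [← h]; simp
      subst hdb
      refine Grothendieck.ext _ _ rfl ?_
      simp only [eqToHom_refl, Category.id_comp]
      apply (F.map g.base).toFunctor.map_injective
      rw [hδ]
      have hBf := Grothendieck.congr hB2
      simp only [Grothendieck.comp_fiber] at hBf
      have hc2 : (eqToHom hγ.symm ≫ (F.map g.base).toFunctor.map df) ≫ g.fiber = v.fiber := by
        simp only [Category.assoc]
        rw [eqToHom_comp_iff] at hBf ⊢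
        rw [hBf]
        simp
        exact eqToHom_chain2_comp _ _ _ _
      have hAf := Grothendieck.congr hA2
      simp only [Grothendieck.comp_fiber] at hAf
      have hc1 : (eqToHom hα ≫ (F.map v.base).toFunctor.map f.fiber) ≫ (eqToHom hγ.symm ≫ (F.map g.base).toFunctor.map df)
          = eqToHom hβ ≫ (F.map g.base).toFunctor.map u.fiber := by
        have key := congrArg (F.map g.base).toFunctor.map hAf
        simp only [Functor.map_comp, eqToHom_map] at key
        rw [map_map_bridge F (v.base ≫ inv g.base) g.base f.fiber] at key
        rw [Functor.congr_hom (congrArg Cat.Hom.toFunctor <| show F.map ((v.base ≫ inv g.base) ≫ g.base) = F.map v.base by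
          rw [hdg]) f.fiber] at key
        simp only [Category.assoc, eqToHom_trans, eqToHom_trans_assoc] at key
        rw [eqToHom_comp_iff] at key
        simp only [Category.assoc]
        rw [key]
        simp
        exact eqToHom_chain3_comp _ _ _ _ _
      have := hduniq (eqToHom hγ.symm ≫ (F.map g.base).toFunctor.map df) ⟨hc1, hc2⟩
      rw [← this]
      simp
end

section
/- Let ⋯ → C₂ → C₁ → C₀ be a tower of categories and functors in which every transition functor is surjective on objects and surjective on hom-sets (full). Then for every m ≥ 0 the projection functor from the limit of the tower (the category of strictly compatible families of objects and morphisms) to C_m is surjective on objects and full. If, in addition, every transition functor is faithful, then every projection functor from the limit is also faithful. -/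
open CategoryTheory

universe v u

/-- The strict limit of a tower of categories `⋯ → C₂ → C₁ → C₀`: objects are strictly
compatible families of objects. -/
structure TowerLimit (C : ℕ → Type u) [∀ n, Category.{v} (C n)]
    (T : ∀ n, C (n + 1) ⥤ C n) where
  obj : ∀ n, C n
  compat : ∀ n, (T n).obj (obj (n + 1)) = obj n

namespace TowerLimit

variable {C : ℕ → Type u} [∀ n, Category.{v} (C n)] {T : ∀ n, C (n + 1) ⥤ C n}

/-- Morphisms in the strict limit of a tower of categories: strictly compatible families of
morphisms. -/
@[ext]
structure Hom (X Y : TowerLimit C T) where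
  hom : ∀ n, X.obj n ⟶ Y.obj n
  compat : ∀ n, (T n).map (hom (n + 1)) =
    eqToHom (X.compat n) ≫ hom n ≫ eqToHom (Y.compat n).symm

instance : Category (TowerLimit C T) where
  Hom := Hom
  id X :=
    { hom := fun n => 𝟙 (X.obj n)
      compat := fun n => by simp }
  comp {X Y Z} f g :=
    { hom := fun n => f.hom n ≫ g.hom n
      compat := fun n => by simp [f.compat n, g.compat n] }
  id_comp f := by apply Hom.ext; funext n; exact Category.id_comp _
  comp_id f := by apply Hom.ext; funext n; exact Category.comp_id _
  assoc f g h := by apply Hom.ext; funext n; exact Category.assoc _ _ _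

/-- The projection functor from the strict limit of a tower of categories to its `m`-th
stage. -/
def π (C : ℕ → Type u) [∀ n, Category.{v} (C n)] (T : ∀ n, C (n + 1) ⥤ C n) (m : ℕ) :
    TowerLimit C T ⥤ C m where
  obj X := X.obj m
  map f := f.hom m
  map_id _ := rfl
  map_comp _ _ := rfl

end TowerLimit

section Aux
variable {C : ℕ → Type u} [∀ n, Category.{v} (C n)] (T : ∀ n, C (n + 1) ⥤ C n)

/-- Push an object down from level `j` to level `i` along the tower. -/
def towerDrop (i : ℕ) : ∀ {j : ℕ}, i ≤ j → C j → C i :=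
  Nat.leRec (motive := fun j _ => C j → C i) id
    (fun j _ ih x => ih ((T j).obj x))

lemma towerDrop_self (i : ℕ) (h : i ≤ i) (x : C i) : towerDrop T i h x = x := by
  have := Nat.leRec_self (motive := fun j _ => C j → C i) id
    (fun j _ ih x => ih ((T j).obj x))
  exact congrFun this x

lemma towerDrop_succ (i : ℕ) {j : ℕ} (h : i ≤ j) {h2 : i ≤ j + 1} (x : C (j + 1)) :
    towerDrop T i h2 x = towerDrop T i h ((T j).obj x) := by
  have := Nat.leRec_succ (motive := fun j _ => C j → C i) id
    (fun j _ ih x => ih ((T j).obj x)) h (h2 := h2)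
  exact congrFun this x

lemma towerDrop_comm (i : ℕ) {j : ℕ} (h : i + 1 ≤ j) :
    ∀ x : C j, (T i).obj (towerDrop T (i + 1) h x) =
      towerDrop T i ((Nat.le_succ i).trans h) x := by
  induction j, h using Nat.le_induction with
  | base =>
    intro x
    rw [towerDrop_self, towerDrop_succ T i le_rfl, towerDrop_self]
  | succ j h ih =>
    intro x
    rw [towerDrop_succ T (i + 1) h, ih, towerDrop_succ T i ((Nat.le_succ i).trans h)]

variable (hsurj : ∀ n, Function.Surjective (T n).obj)

/-- A sequence of successive lifts of `x : C m` up the tower. -/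
noncomputable def useq (m : ℕ) (x : C m) : ∀ k, C (m + k)
  | 0 => x
  | k + 1 => (hsurj (m + k) (useq m x k)).choose

lemma useq_spec (m : ℕ) (x : C m) (k : ℕ) :
    (T (m + k)).obj (useq T hsurj m x (k + 1)) = useq T hsurj m x k :=
  (hsurj (m + k) (useq T hsurj m x k)).choose_spec

lemma towerDrop_useq (m : ℕ) (x : C m) :
    ∀ (k : ℕ) (h : m ≤ m + k), towerDrop T m h (useq T hsurj m x k) = x
  | 0, h => towerDrop_self T m h x
  | k + 1, h => by
    rw [towerDrop_succ T m (Nat.le_add_right m k), useq_spec,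
      towerDrop_useq m x k (Nat.le_add_right m k)]

variable {T} in
/-- Push a morphism between levels of two tower elements down from level `j` to level `i`. -/
def homDrop (X Y : TowerLimit C T) (i : ℕ) :
    ∀ {j : ℕ}, i ≤ j → (X.obj j ⟶ Y.obj j) → (X.obj i ⟶ Y.obj i) :=
  Nat.leRec (motive := fun j _ => (X.obj j ⟶ Y.obj j) → (X.obj i ⟶ Y.obj i)) id
    (fun j _ ih f => ih (eqToHom (X.compat j).symm ≫ (T j).map f ≫ eqToHom (Y.compat j)))

variable {T}

lemma homDrop_self (X Y : TowerLimit C T) (i : ℕ) (h : i ≤ i) (f : X.obj i ⟶ Y.obj i) :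
    homDrop X Y i h f = f := by
  have := Nat.leRec_self
    (motive := fun j _ => (X.obj j ⟶ Y.obj j) → (X.obj i ⟶ Y.obj i)) id
    (fun j _ ih f => ih (eqToHom (X.compat j).symm ≫ (T j).map f ≫ eqToHom (Y.compat j)))
  exact congrFun this f

lemma homDrop_succ (X Y : TowerLimit C T) (i : ℕ) {j : ℕ} (h : i ≤ j) {h2 : i ≤ j + 1}
    (f : X.obj (j + 1) ⟶ Y.obj (j + 1)) :
    homDrop X Y i h2 f =
      homDrop X Y i h (eqToHom (X.compat j).symm ≫ (T j).map f ≫ eqToHom (Y.compat j)) := by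
  have := Nat.leRec_succ
    (motive := fun j _ => (X.obj j ⟶ Y.obj j) → (X.obj i ⟶ Y.obj i)) id
    (fun j _ ih f => ih (eqToHom (X.compat j).symm ≫ (T j).map f ≫ eqToHom (Y.compat j)))
    h (h2 := h2)
  exact congrFun this f

lemma homDrop_comm (X Y : TowerLimit C T) (i : ℕ) {j : ℕ} (h : i + 1 ≤ j) :
    ∀ f : X.obj j ⟶ Y.obj j,
      (T i).map (homDrop X Y (i + 1) h f) =
        eqToHom (X.compat i) ≫ homDrop X Y i ((Nat.le_succ i).trans h) f ≫
          eqToHom (Y.compat i).symm := by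
  induction j, h using Nat.le_induction with
  | base =>
    intro f
    rw [homDrop_self, homDrop_succ X Y i le_rfl, homDrop_self]
    simp
  | succ j h ih =>
    intro f
    rw [homDrop_succ X Y (i + 1) h, ih, homDrop_succ X Y i ((Nat.le_succ i).trans h)]

variable (hfull : ∀ n, (T n).Full)

/-- A sequence of successive lifts of a morphism `f` up the tower. -/
noncomputable def gseq (X Y : TowerLimit C T) (m : ℕ) (f : X.obj m ⟶ Y.obj m) :
    ∀ k, X.obj (m + k) ⟶ Y.obj (m + k)
  | 0 => f
  | k + 1 =>
    ((hfull (m + k)).map_surjective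
      (eqToHom (X.compat (m + k)) ≫ gseq X Y m f k ≫ eqToHom (Y.compat (m + k)).symm)).choose

lemma gseq_spec (X Y : TowerLimit C T) (m : ℕ) (f : X.obj m ⟶ Y.obj m) (k : ℕ) :
    (T (m + k)).map (gseq hfull X Y m f (k + 1)) =
      eqToHom (X.compat (m + k)) ≫ gseq hfull X Y m f k ≫ eqToHom (Y.compat (m + k)).symm :=
  ((hfull (m + k)).map_surjective _).choose_spec

lemma homDrop_gseq (X Y : TowerLimit C T) (m : ℕ) (f : X.obj m ⟶ Y.obj m) :
    ∀ (k : ℕ) (h : m ≤ m + k), homDrop X Y m h (gseq hfull X Y m f k) = f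
  | 0, h => homDrop_self X Y m h f
  | k + 1, h => by
    rw [homDrop_succ X Y m (Nat.le_add_right m k), gseq_spec]
    have : eqToHom (X.compat (m + k)).symm ≫
        (eqToHom (X.compat (m + k)) ≫ gseq hfull X Y m f k ≫
          eqToHom (Y.compat (m + k)).symm) ≫ eqToHom (Y.compat (m + k)) =
        gseq hfull X Y m f k := by simp
    rw [this, homDrop_gseq X Y m f k (Nat.le_add_right m k)]

end Aux


/-- If every transition functor of a tower of categories is surjective on objects and full,
then every projection from the strict limit of the tower is surjective on objects and full;
if moreover every transition functor is faithful, then every projection is faithful. -/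
theorem stmt9 {C : ℕ → Type u} [∀ n, Category.{v} (C n)] (T : ∀ n, C (n + 1) ⥤ C n)
    (hsurj : ∀ n, Function.Surjective (T n).obj)
    (hfull : ∀ n, (T n).Full) :
    (∀ m : ℕ, Function.Surjective (TowerLimit.π C T m).obj ∧ (TowerLimit.π C T m).Full) ∧
    ((∀ n, (T n).Faithful) → ∀ m : ℕ, (TowerLimit.π C T m).Faithful) := by
  constructor
  · intro m
    constructor
    · -- surjectivity on objects
      intro x
      refine ⟨{ obj := fun n => towerDrop T n (Nat.le_add_left n m) (useq T hsurj m x n)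
                compat := fun n => ?_ }, ?_⟩
      · rw [towerDrop_comm T n (Nat.le_add_left (n + 1) m),
          towerDrop_succ T n (Nat.le_add_left n m), useq_spec]
      · exact towerDrop_useq T hsurj m x m (Nat.le_add_left m m)
    · -- fullness
      refine ⟨fun {X Y} f => ?_⟩
      refine ⟨{ hom := fun n => homDrop X Y n (Nat.le_add_left n m) (gseq hfull X Y m f n)
                compat := fun n => ?_ }, ?_⟩
      · rw [homDrop_comm X Y n (Nat.le_add_left (n + 1) m),
          homDrop_succ X Y n (Nat.le_add_left n m), gseq_spec hfull X Y m f n]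
        have : eqToHom (X.compat (m + n)).symm ≫
            (eqToHom (X.compat (m + n)) ≫ gseq hfull X Y m f n ≫
              eqToHom (Y.compat (m + n)).symm) ≫ eqToHom (Y.compat (m + n)) =
            gseq hfull X Y m f n := by simp
        rw [this]
      · exact homDrop_gseq hfull X Y m f m (Nat.le_add_left m m)
  · -- faithfulness
    intro hf m
    refine ⟨fun {X Y} {a b} hab => ?_⟩
    have hab' : a.hom m = b.hom m := hab
    have up : ∀ n, a.hom n = b.hom n → a.hom (n + 1) = b.hom (n + 1) := fun n h =>
      (hf n).map_injective (by rw [a.compat n, b.compat n, h])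
    have down : ∀ n, a.hom (n + 1) = b.hom (n + 1) → a.hom n = b.hom n := by
      intro n h
      have key := (a.compat n).symm.trans
        ((congrArg (T n).map h).trans (b.compat n))
      rw [cancel_epi, cancel_mono] at key
      exact key
    have upall : ∀ k, a.hom (m + k) = b.hom (m + k) := by
      intro k
      induction k with
      | zero => exact hab'
      | succ k ih => exact up (m + k) ih
    have downall : ∀ j n, a.hom (n + j) = b.hom (n + j) → a.hom n = b.hom n := by
      intro j
      induction j with
      | zero => exact fun n h => h
      | succ j ih => exact fun n h => ih n (down (n + j) h)
    apply TowerLimit.Hom.ext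
    funext n
    rcases le_total n m with h | h
    · obtain ⟨k, rfl⟩ := Nat.exists_eq_add_of_le h
      exact downall k n hab'
    · obtain ⟨k, rfl⟩ := Nat.exists_eq_add_of_le h
      exact upall k
end

section
/- Let S be a category, let F, G : S ⥤ Cat be functors, let α : F ⟶ G be a natural transformation, and let ∫α : ∫F → ∫G denote the induced functor between Grothendieck constructions over S. Then ∫α is an equivalence of categories (respectively: fully faithful; full; faithful; essentially surjective) if and only if for every object s of S the component α_s : F(s) → G(s) is an equivalence of categories (respectively: fully faithful; full; faithful; essentially surjective). -/
open CategoryTheory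

universe v₂ u₂ v₁ u₁

namespace Stmt10Aux

variable {S : Type u₁} [Category.{v₁} S] {F G : S ⥤ Cat.{v₂, u₂}}

/-- The fiber component of an isomorphism in a Grothendieck construction is an isomorphism. -/
lemma fiber_isIso {X Y : Grothendieck G} (f : X ⟶ Y) [IsIso f] : IsIso f.fiber := by
  let g := CategoryTheory.inv f
  have h1 : g ≫ f = 𝟙 Y := IsIso.inv_hom_id f
  have h2 : f ≫ g = 𝟙 X := IsIso.hom_inv_id f
  have hb1 : g.base ≫ f.base = 𝟙 Y.base := congrArg Grothendieck.Hom.base h1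
  have e1 := Grothendieck.congr h1
  have e2 := Grothendieck.congr h2
  simp only [Grothendieck.comp_fiber, Grothendieck.id_fiber] at e1 e2
  have hcomp : (G.map g.base).toFunctor ⋙ (G.map f.base).toFunctor = 𝟭 (G.obj Y.base) := by
    rw [← Cat.Hom.comp_toFunctor, ← G.map_comp, hb1, G.map_id]; rfl
  have w : Y.fiber = (G.map f.base).toFunctor.obj ((G.map g.base).toFunctor.obj Y.fiber) :=
    (Functor.congr_obj hcomp Y.fiber).symm
  have w1 : Y.fiber = (G.map (g.base ≫ f.base)).toFunctor.obj Y.fiber := by rw [hb1, G.map_id]; rfl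
  have w2 : (G.map (g.base ≫ f.base)).toFunctor.obj Y.fiber
      = (G.map f.base).toFunctor.obj ((G.map g.base).toFunctor.obj Y.fiber) := by rw [G.map_comp]; rfl
  have hl : (eqToHom w ≫ (G.map f.base).toFunctor.map g.fiber) ≫ f.fiber = 𝟙 Y.fiber := by
    have hw : eqToHom w = eqToHom w1 ≫ eqToHom w2 := by simp
    rw [hw, Category.assoc, Category.assoc]
    erw [e1]
    exact (eqToHom_trans_assoc _ _ _).trans ((eqToHom_trans _ _).trans (eqToHom_refl _ _))
  have key' : (G.map f.base).toFunctor.map ((G.map g.base).toFunctor.map f.fiber)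
      = eqToHom (Functor.congr_obj hcomp _) ≫ f.fiber ≫ eqToHom (Functor.congr_obj hcomp _).symm
      := Functor.congr_hom hcomp f.fiber
  have e2'' := congrArg (fun t => (G.map f.base).toFunctor.map t) e2
  simp only [Functor.map_comp, eqToHom_map] at e2''
  rw [eqToHom_comp_iff] at e2''
  simp only [eqToHom_trans] at e2''
  have hmono : Mono f.fiber := by
    have m1 : Mono ((G.map f.base).toFunctor.map ((G.map g.base).toFunctor.map f.fiber) ≫ (G.map f.base).toFunctor.map g.fiber)
        := by rw [e2'']; infer_instance
    have m2 : Mono ((G.map f.base).toFunctor.map ((G.map g.base).toFunctor.map f.fiber)) :=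
      mono_of_mono _ ((G.map f.base).toFunctor.map g.fiber)
    have hf : f.fiber = eqToHom (Functor.congr_obj hcomp _).symm ≫
        ((G.map f.base).toFunctor.map ((G.map g.base).toFunctor.map f.fiber)) ≫ eqToHom (Functor.congr_obj hcomp _)
        := by rw [key']; simp
    rw [hf]
    infer_instance
  exact ⟨eqToHom w ≫ (G.map f.base).toFunctor.map g.fiber,
    by rw [← cancel_mono f.fiber, Category.assoc, hl, Category.comp_id, Category.id_comp], hl⟩

/-- The fiber inclusions commute with `Grothendieck.map`. -/
lemma ι_comp_map (α : F ⟶ G) (s : S) :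
    Grothendieck.ι F s ⋙ Grothendieck.map α = (α.app s).toFunctor ⋙ Grothendieck.ι G s := by
  exact Functor.ext_of_iso (Grothendieck.ιCompMap α s) (fun d => rfl) (fun d => rfl)

lemma faithful_iff (α : F ⟶ G) :
    (Grothendieck.map α).Faithful ↔ ∀ s : S, (α.app s).toFunctor.Faithful := by
  constructor
  · intro h s
    have : (Grothendieck.ι F s ⋙ Grothendieck.map α).Faithful := Functor.Faithful.comp _ _
    rw [ι_comp_map] at this
    exact Functor.Faithful.of_comp (α.app s).toFunctor (Grothendieck.ι G s)
  · intro h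
    constructor
    intro X Y f f' hff
    have hb : f.base = f'.base := congrArg (fun t => t.base) hff
    obtain ⟨Xb, Xf⟩ := X; obtain ⟨Yb, Yf⟩ := Y
    obtain ⟨fb, ff⟩ := f; obtain ⟨fb', ff'⟩ := f'
    dsimp at hb
    subst hb
    have hfib : (eqToHom (α.naturality fb).symm).toNatTrans.app Xf ≫ (α.app Yb).toFunctor.map ff
        = (eqToHom (α.naturality fb).symm).toNatTrans.app Xf ≫ (α.app Yb).toFunctor.map ff' :=
      eq_of_heq (Grothendieck.Hom.mk.inj hff).2
    rw [Cat.eqToHom_app] at hfib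
    rw [cancel_epi] at hfib
    congr 1
    exact (α.app Yb).toFunctor.map_injective hfib

lemma full_iff (α : F ⟶ G) :
    (Grothendieck.map α).Full ↔ ∀ s : S, (α.app s).toFunctor.Full := by
  constructor
  · intro h s
    constructor
    intro x y ψ
    obtain ⟨f, hf⟩ := (Grothendieck.map α).map_surjective
      (show (Grothendieck.map α).obj ⟨s, x⟩ ⟶ (Grothendieck.map α).obj ⟨s, y⟩ from
        (Grothendieck.ι G s).map ψ)
    obtain ⟨fb, ff⟩ := f
    have hb : fb = 𝟙 s := congrArg (fun t => t.base) hf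
    subst hb
    refine ⟨eqToHom (by simp) ≫ ff, ?_⟩
    have hfib : (eqToHom (α.naturality (𝟙 s)).symm).toNatTrans.app x ≫ (α.app s).toFunctor.map ff
        = eqToHom (by simp) ≫ ψ := eq_of_heq (Grothendieck.Hom.mk.inj hf).2
    rw [Cat.eqToHom_app] at hfib
    simp only [Functor.map_comp, eqToHom_map]
    rw [eqToHom_comp_iff] at hfib ⊢
    rw [hfib]
    simp
  · intro h
    constructor
    intro X Y ψ
    have p : (α.app Y.base).toFunctor.obj ((F.map ψ.base).toFunctor.obj X.fiber)
        = (G.map ψ.base).toFunctor.obj ((α.app X.base).toFunctor.obj X.fiber) :=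
      Functor.congr_obj (congrArg Cat.Hom.toFunctor (α.naturality ψ.base)) X.fiber
    refine ⟨⟨ψ.base, (α.app Y.base).toFunctor.preimage (eqToHom p ≫ ψ.fiber)⟩, ?_⟩
    fapply Grothendieck.ext
    · rfl
    · simp [Grothendieck.map_map, Cat.eqToHom_app, Functor.map_preimage]
      erw [eqToHom_trans_assoc, eqToHom_trans_assoc, eqToHom_refl, Category.id_comp]

lemma essSurj_iff (α : F ⟶ G) :
    (Grothendieck.map α).EssSurj ↔ ∀ s : S, (α.app s).toFunctor.EssSurj := by
  constructor
  · intro h s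
    constructor
    intro y
    let X := (Grothendieck.map α).objPreimage ⟨s, y⟩
    let e := (Grothendieck.map α).objObjPreimageIso ⟨s, y⟩
    have hfib : IsIso e.hom.fiber := fiber_isIso e.hom
    refine ⟨(F.map e.hom.base).toFunctor.obj X.fiber, ⟨eqToIso ?_ ≪≫ asIso e.hom.fiber⟩⟩
    exact Functor.congr_obj (congrArg Cat.Hom.toFunctor (α.naturality e.hom.base)) X.fiber
  · intro h
    constructor
    intro Y
    exact ⟨⟨Y.base, (α.app Y.base).toFunctor.objPreimage Y.fiber⟩,
      ⟨(Grothendieck.ι G Y.base).mapIso ((α.app Y.base).toFunctor.objObjPreimageIso Y.fiber)⟩⟩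

end Stmt10Aux

/-- The functor `∫α : ∫F ⥤ ∫G` between Grothendieck constructions induced by a natural
transformation `α : F ⟶ G` is an equivalence (resp. fully faithful, full, faithful,
essentially surjective) if and only if each component `α.app s : F.obj s ⥤ G.obj s` is. -/
theorem stmt10 {S : Type u₁} [Category.{v₁} S] {F G : S ⥤ Cat.{v₂, u₂}} (α : F ⟶ G) :
    ((Grothendieck.map α).IsEquivalence ↔ ∀ s : S, (α.app s).toFunctor.IsEquivalence) ∧
    (((Grothendieck.map α).Full ∧ (Grothendieck.map α).Faithful) ↔
      ∀ s : S, ((α.app s).toFunctor.Full ∧ (α.app s).toFunctor.Faithful)) ∧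
    ((Grothendieck.map α).Full ↔ ∀ s : S, (α.app s).toFunctor.Full) ∧
    ((Grothendieck.map α).Faithful ↔ ∀ s : S, (α.app s).toFunctor.Faithful) ∧
    ((Grothendieck.map α).EssSurj ↔ ∀ s : S, (α.app s).toFunctor.EssSurj) := by
  have hfull := Stmt10Aux.full_iff α
  have hfaith := Stmt10Aux.faithful_iff α
  have hess := Stmt10Aux.essSurj_iff α
  refine ⟨?_, ?_, hfull, hfaith, hess⟩
  · constructor
    · intro h s
      exact ⟨hfaith.mp h.faithful s, hfull.mp h.full s, hess.mp h.essSurj s⟩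
    · intro h
      exact ⟨hfaith.mpr fun s => (h s).faithful, hfull.mpr fun s => (h s).full,
        hess.mpr fun s => (h s).essSurj⟩
  · constructor
    · intro ⟨h1, h2⟩ s
      exact ⟨hfull.mp h1 s, hfaith.mp h2 s⟩
    · intro h
      exact ⟨hfull.mpr fun s => (h s).1, hfaith.mpr fun s => (h s).2⟩
end

section
/- Let q : Y → S and φ : X → Y be functors of categories and set p := q∘φ : X → S. Fix one of the following properties of functors: fully faithful; faithful; full; essentially surjective. Then the following are equivalent: (1) φ has the property; (2) for every functor u : T → S, the induced functor Comma(u, p) → Comma(u, q), sending (t, x, σ : u(t) → p(x)) to (t, φ(x), σ), has the property; (3) for every object s of S, the induced functor on structured arrow categories (s ↓ p) → (s ↓ q) has the property. -/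
open CategoryTheory

universe v₄ u₄ v₁ u₁ v₂ u₂ v₃ u₃

section Helpers


variable {X : Type u₁} [Category.{v₁} X] {Y : Type u₂} [Category.{v₂} Y]
    {S : Type u₃} [Category.{v₃} S] (φ : X ⥤ Y) (q : Y ⥤ S)

/-- A small test category in universes `u₄, v₄`. -/
abbrev TestCat : Type u₄ := ULiftHom.{v₄} (ULift.{u₄} (Discrete PUnit.{1}))

def t0 : TestCat.{v₄, u₄} := ULiftHom.objUp ⟨⟨PUnit.unit⟩⟩

lemma faithful_of_comma
    (h : ∀ {T : Type u₄} [Category.{v₄} T] (u : T ⥤ S), (Comma.preRight u φ q).Faithful) :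
    φ.Faithful := by
  constructor
  intro x x' f g hfg
  set u : TestCat.{v₄, u₄} ⥤ S := (Functor.const _).obj ((φ ⋙ q).obj x) with hu
  have := h u
  have hpf : (φ ⋙ q).map f = (φ ⋙ q).map g := by
    simp only [Functor.comp_map, hfg]
  let A : Comma u (φ ⋙ q) := ⟨t0, x, 𝟙 _⟩
  let B : Comma u (φ ⋙ q) := ⟨t0, x', (φ ⋙ q).map f⟩
  let F : A ⟶ B := ⟨𝟙 _, f, by simp [A, B, u]⟩
  let G : A ⟶ B := ⟨𝟙 _, g, by simp [A, B, u, hfg]⟩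
  have : (Comma.preRight u φ q).map F = (Comma.preRight u φ q).map G := by
    apply CommaMorphism.ext
    · rfl
    · exact hfg
  have := (h u).map_injective this
  exact congrArg CommaMorphism.right this

lemma full_of_comma
    (h : ∀ {T : Type u₄} [Category.{v₄} T] (u : T ⥤ S), (Comma.preRight u φ q).Full) :
    φ.Full := by
  constructor
  intro x x' f
  set u : TestCat.{v₄, u₄} ⥤ S := (Functor.const _).obj ((φ ⋙ q).obj x) with hu
  let A : Comma u (φ ⋙ q) := ⟨t0, x, 𝟙 _⟩
  let B : Comma u (φ ⋙ q) := ⟨t0, x', q.map f⟩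
  let H : (Comma.preRight u φ q).obj A ⟶ (Comma.preRight u φ q).obj B :=
    ⟨𝟙 _, f, by simp [A, B, u, Comma.preRight]⟩
  obtain ⟨F, hF⟩ := (h u).map_surjective H
  exact ⟨F.right, congrArg CommaMorphism.right hF⟩

lemma essSurj_of_comma
    (h : ∀ {T : Type u₄} [Category.{v₄} T] (u : T ⥤ S), (Comma.preRight u φ q).EssSurj) :
    φ.EssSurj := by
  constructor
  intro y
  set u : TestCat.{v₄, u₄} ⥤ S := (Functor.const _).obj (q.obj y) with hu
  let B : Comma u q := ⟨t0, y, 𝟙 _⟩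
  obtain ⟨A, ⟨e⟩⟩ := (h u).mem_essImage B
  refine ⟨A.right, ⟨⟨e.hom.right, e.inv.right, ?_, ?_⟩⟩⟩
  · have := congrArg CommaMorphism.right e.hom_inv_id
    exact this
  · have := congrArg CommaMorphism.right e.inv_hom_id
    exact this

lemma faithful_of_sa
    (h : ∀ s : S, (StructuredArrow.pre s φ q).Faithful) : φ.Faithful := by
  constructor
  intro x x' f g hfg
  have hpf : (φ ⋙ q).map f = (φ ⋙ q).map g := by simp only [Functor.comp_map, hfg]
  let s := (φ ⋙ q).obj x
  let A : StructuredArrow s (φ ⋙ q) := StructuredArrow.mk (𝟙 s)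
  let B : StructuredArrow s (φ ⋙ q) := StructuredArrow.mk ((φ ⋙ q).map f)
  let F : A ⟶ B := StructuredArrow.homMk f (by simp [A, B])
  let G : A ⟶ B := StructuredArrow.homMk g (by simp [A, B, hfg])
  have : (StructuredArrow.pre s φ q).map F = (StructuredArrow.pre s φ q).map G := by
    apply StructuredArrow.hom_ext
    exact hfg
  have := (h s).map_injective this
  exact congrArg CommaMorphism.right this

lemma full_of_sa
    (h : ∀ s : S, (StructuredArrow.pre s φ q).Full) : φ.Full := by
  constructor
  intro x x' f
  let s := (φ ⋙ q).obj x
  let A : StructuredArrow s (φ ⋙ q) := StructuredArrow.mk (𝟙 s)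
  let B : StructuredArrow s (φ ⋙ q) := StructuredArrow.mk (q.map f)
  let H : (StructuredArrow.pre s φ q).obj A ⟶ (StructuredArrow.pre s φ q).obj B :=
    StructuredArrow.homMk f (by simp [A, B, StructuredArrow.pre, Comma.preRight]; exact Category.id_comp _)
  obtain ⟨F, hF⟩ := (h s).map_surjective H
  exact ⟨F.right, congrArg CommaMorphism.right hF⟩

lemma essSurj_of_sa
    (h : ∀ s : S, (StructuredArrow.pre s φ q).EssSurj) : φ.EssSurj := by
  constructor
  intro y
  let B : StructuredArrow (q.obj y) q := StructuredArrow.mk (𝟙 (q.obj y))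
  obtain ⟨A, ⟨e⟩⟩ := (h (q.obj y)).mem_essImage B
  exact ⟨A.right, ⟨⟨e.hom.right, e.inv.right,
    congrArg CommaMorphism.right e.hom_inv_id,
    congrArg CommaMorphism.right e.inv_hom_id⟩⟩⟩

end Helpers

/-- For `φ : X ⥤ Y` over `S` (via `q : Y ⥤ S`, `p := φ ⋙ q`), and each of the properties
"fully faithful", "faithful", "full", "essentially surjective", the following are
equivalent: (1) `φ` has the property; (2) for every `u : T ⥤ S` the induced functor
`Comma u p ⥤ Comma u q` has the property; (3) for every `s : S` the induced functor
`(s ↓ p) ⥤ (s ↓ q)` on structured arrow categories has the property. -/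
theorem stmt11 {X : Type u₁} [Category.{v₁} X] {Y : Type u₂} [Category.{v₂} Y]
    {S : Type u₃} [Category.{v₃} S] (φ : X ⥤ Y) (q : Y ⥤ S) :
    -- fully faithful
    (((φ.Full ∧ φ.Faithful) ↔
        ∀ {T : Type u₄} [Category.{v₄} T] (u : T ⥤ S),
          ((Comma.preRight u φ q).Full ∧ (Comma.preRight u φ q).Faithful)) ∧
      ((φ.Full ∧ φ.Faithful) ↔
        ∀ s : S, ((StructuredArrow.pre s φ q).Full ∧ (StructuredArrow.pre s φ q).Faithful))) ∧
    -- faithful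
    ((φ.Faithful ↔
        ∀ {T : Type u₄} [Category.{v₄} T] (u : T ⥤ S), (Comma.preRight u φ q).Faithful) ∧
      (φ.Faithful ↔ ∀ s : S, (StructuredArrow.pre s φ q).Faithful)) ∧
    -- full
    ((φ.Full ↔
        ∀ {T : Type u₄} [Category.{v₄} T] (u : T ⥤ S), (Comma.preRight u φ q).Full) ∧
      (φ.Full ↔ ∀ s : S, (StructuredArrow.pre s φ q).Full)) ∧
    -- essentially surjective
    ((φ.EssSurj ↔
        ∀ {T : Type u₄} [Category.{v₄} T] (u : T ⥤ S), (Comma.preRight u φ q).EssSurj) ∧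
      (φ.EssSurj ↔ ∀ s : S, (StructuredArrow.pre s φ q).EssSurj)) := by
  refine ⟨⟨⟨?_, ?_⟩, ⟨?_, ?_⟩⟩, ⟨⟨?_, ?_⟩, ⟨?_, ?_⟩⟩, ⟨⟨?_, ?_⟩, ⟨?_, ?_⟩⟩, ⟨⟨?_, ?_⟩, ⟨?_, ?_⟩⟩⟩
  · rintro ⟨h1, h2⟩ T _ u
    exact ⟨inferInstance, inferInstance⟩
  · intro h
    exact ⟨full_of_comma φ q fun u => (h u).1, faithful_of_comma φ q fun u => (h u).2⟩
  · rintro ⟨h1, h2⟩ s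
    exact ⟨inferInstance, inferInstance⟩
  · intro h
    exact ⟨full_of_sa φ q fun s => (h s).1, faithful_of_sa φ q fun s => (h s).2⟩
  · intro h T _ u
    exact inferInstance
  · exact faithful_of_comma φ q
  · intro h s
    exact inferInstance
  · exact faithful_of_sa φ q
  · intro h T _ u
    exact inferInstance
  · exact full_of_comma φ q
  · intro h s
    exact inferInstance
  · exact full_of_sa φ q
  · intro h T _ u
    exact inferInstance
  · exact essSurj_of_comma φ q
  · intro h s
    exact inferInstance
  · exact essSurj_of_sa φ q
end

section
/- Let D be a small category which is the union of an increasing sequence D₀ ⊆ D₁ ⊆ D₂ ⊆ ⋯ of full subcategories, let C be a cocomplete locally small category, and let f : D → C be a dense functor, meaning that the restricted Yoneda functor C → Psh(D), X ↦ Hom_C(f(−), X), is fully faithful. For each n, let fₙ : Dₙ → C be the restriction of f, let fₙ* : C → Psh(Dₙ) be the restricted Yoneda functor X ↦ Hom_C(fₙ(−), X), and let f_{n!} : Psh(Dₙ) → C be its left adjoint (the left Kan extension of fₙ along the Yoneda embedding). Then for every object X of C, the canonical morphism colim_{n ≥ 0} f_{n!}(fₙ*(X)) → X, induced by the counits of the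 adjunctions f_{n!} ⊣ fₙ*, is an isomorphism. -/
open CategoryTheory Limits Opposite

universe u₂ u

namespace Stmt16

/-- The restricted Yoneda functor, with its meaning in the older Mathlib (no `ULift`). -/
def Presheaf.restrictedYoneda.{v₁, u₁, u₃} {C' : Type u₁} [Category.{v₁} C'] {ℰ : Type u₃}
    [Category.{v₁} ℰ] (A : C' ⥤ ℰ) : ℰ ⥤ C'ᵒᵖ ⥤ Type v₁ :=
  yoneda ⋙ (Functor.whiskeringLeft _ _ (Type v₁)).obj (Functor.op A)

variable {D : Type u} [SmallCategory D] (P : ℕ → D → Prop)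
  {C : Type u₂} [Category.{u} C] (f : D ⥤ C)

/-- The restriction of `f` to the `n`-th full subcategory. -/
abbrev fRes (n : ℕ) : ObjectProperty.FullSubcategory (P n) ⥤ C :=
  ObjectProperty.ι (P n) ⋙ f

variable (hmono : ∀ (n : ℕ) (d : D), P n d → P (n + 1) d)
  (Lk : ∀ n : ℕ, ((ObjectProperty.FullSubcategory (P n))ᵒᵖ ⥤ Type u) ⥤ C)
  (adj : ∀ n : ℕ, Lk n ⊣ Presheaf.restrictedYoneda (fRes P f n))

/-- The comparison map `(fRes n)* X ⟶ (fRes n)* (f_{(n+1)!} ((fRes (n+1))* X))` given by the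
unit of the `(n+1)`-st adjunction. -/
def theta (X : C) (n : ℕ) :
    (Presheaf.restrictedYoneda (fRes P f n)).obj X ⟶
      (Presheaf.restrictedYoneda (fRes P f n)).obj
        ((Lk (n + 1)).obj ((Presheaf.restrictedYoneda (fRes P f (n + 1))).obj X)) where
  app d :=
    ((adj (n + 1)).unit.app ((Presheaf.restrictedYoneda (fRes P f (n + 1))).obj X)).app
      (op ⟨d.unop.obj, hmono n d.unop.obj d.unop.property⟩)
  naturality := by
    intro d d' e
    exact
      (((adj (n + 1)).unit.app
          ((Presheaf.restrictedYoneda (fRes P f (n + 1))).obj X)).naturality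
        (Quiver.Hom.op
          (X := (⟨d'.unop.obj, hmono n d'.unop.obj d'.unop.property⟩ :
            ObjectProperty.FullSubcategory (P (n + 1))))
          (Y := ⟨d.unop.obj, hmono n d.unop.obj d.unop.property⟩)
          (ObjectProperty.homMk e.unop.hom)))

/-- The transition morphism `f_{n!}((fRes n)* X) ⟶ f_{(n+1)!}((fRes (n+1))* X)`. -/
def transition (X : C) (n : ℕ) :
    (Lk n).obj ((Presheaf.restrictedYoneda (fRes P f n)).obj X) ⟶
      (Lk (n + 1)).obj ((Presheaf.restrictedYoneda (fRes P f (n + 1))).obj X) :=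
  ((adj n).homEquiv _ _).symm (theta P f hmono Lk adj X n)

/-- The canonical cocone, with apex `X`, on the sequence
`n ↦ f_{n!}((fRes n)* X)`, whose components are the counits of the adjunctions. -/
def canonicalCocone (X : C) :
    Cocone (Functor.ofSequence (transition P f hmono Lk adj X)) :=
  Cocone.mk X
    (NatTrans.ofSequence (F := Functor.ofSequence (transition P f hmono Lk adj X))
      (G := (Functor.const ℕ).obj X)
      (fun n => (adj n).counit.app X)
      (fun n => by
        have key : theta P f hmono Lk adj X n ≫
            (Presheaf.restrictedYoneda (fRes P f n)).map ((adj (n + 1)).counit.app X) =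
              𝟙 _ := by
          refine NatTrans.ext (funext fun d => ?_)
          exact
            (NatTrans.congr_app ((adj (n + 1)).right_triangle_components X)
              (op ⟨d.unop.obj, hmono n d.unop.obj d.unop.property⟩))
        rw [Functor.ofSequence_map_homOfLE_succ]
        refine Eq.trans (?_ : transition P f hmono Lk adj X n ≫ (adj (n + 1)).counit.app X =
          (adj n).counit.app X) (Category.comp_id ((adj n).counit.app X)).symm
        rw [transition]
        apply ((adj n).homEquiv _ _).injective
        rw [Adjunction.homEquiv_naturality_right, Equiv.apply_symm_apply, key,
          Adjunction.homEquiv_unit]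
        exact ((adj n).right_triangle_components X).symm))


section Aux
set_option linter.unusedSectionVars false

include hmono in
lemma pAll {n m : ℕ} (h : n ≤ m) {d : D} (hd : P n d) : P m d := by
  induction h with
  | refl => exact hd
  | step _ ih => exact hmono _ _ ih

variable (X : C) (s : Cocone (Functor.ofSequence (transition P f hmono Lk adj X)))

/-- The value at `u : f.obj d ⟶ X` of the adjoint transpose of the `n`-th component of a
cocone `s` on the canonical sequence. -/
def val (n : ℕ) (d : D) (hd : P n d) (u : f.obj d ⟶ X) : f.obj d ⟶ s.pt :=
  (((adj n).homEquiv _ _ (s.ι.app n)).app (op ⟨d, hd⟩)) u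

lemma val_succ (n : ℕ) (d : D) (hd : P n d) (u : f.obj d ⟶ X) :
    val P f hmono Lk adj X s (n + 1) d (hmono n d hd) u =
      val P f hmono Lk adj X s n d hd u := by
  have h : transition P f hmono Lk adj X n ≫ s.ι.app (n + 1) = s.ι.app n := by
    have h0 := s.w (homOfLE (Nat.le_succ n))
    rw [Functor.ofSequence_map_homOfLE_succ] at h0
    exact h0
  dsimp only [val]
  conv_rhs => rw [← h]
  erw [transition, Adjunction.homEquiv_naturality_right, Equiv.apply_symm_apply,
    Adjunction.homEquiv_unit]
  rfl

lemma val_mono {n m : ℕ} (h : n ≤ m) (d : D) (hd : P n d) (u : f.obj d ⟶ X) :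
    val P f hmono Lk adj X s m d (pAll P hmono h hd) u =
      val P f hmono Lk adj X s n d hd u := by
  induction h with
  | refl => rfl
  | step h ih => exact (val_succ P f hmono Lk adj X s _ d _ u).trans ih

lemma val_indep (n m : ℕ) (d : D) (hd : P n d) (hd' : P m d) (u : f.obj d ⟶ X) :
    val P f hmono Lk adj X s n d hd u = val P f hmono Lk adj X s m d hd' u :=
  (val_mono P f hmono Lk adj X s (le_max_left n m) d hd u).symm.trans
    (val_mono P f hmono Lk adj X s (le_max_right n m) d hd' u)

lemma val_natural (n : ℕ) {d d' : D} (e : d' ⟶ d) (hd : P n d) (hd' : P n d')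
    (u : f.obj d ⟶ X) :
    val P f hmono Lk adj X s n d' hd' (f.map e ≫ u) =
      f.map e ≫ val P f hmono Lk adj X s n d hd u :=
  ConcreteCategory.congr_hom (((adj n).homEquiv _ _ (s.ι.app n)).naturality
    (Quiver.Hom.op (X := (⟨d', hd'⟩ : ObjectProperty.FullSubcategory (P n))) (Y := ⟨d, hd⟩)
      (ObjectProperty.homMk e))) u

/-- The morphism of presheaves on `D` obtained by gluing the adjoint transposes of the
components of a cocone `s`. -/
noncomputable def glue (hcover : ∀ d : D, ∃ n : ℕ, P n d) :
    (Presheaf.restrictedYoneda f).obj X ⟶ (Presheaf.restrictedYoneda f).obj s.pt where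
  app d := TypeCat.ofHom fun u => val P f hmono Lk adj X s (hcover d.unop).choose d.unop
    (hcover d.unop).choose_spec u
  naturality := by
    intro d d' e
    ext (u : f.obj d.unop ⟶ X)
    show val P f hmono Lk adj X s _ d'.unop _ (f.map e.unop ≫ u) =
      f.map e.unop ≫ val P f hmono Lk adj X s _ d.unop _ u
    set n₁ := (hcover d.unop).choose
    set n₂ := (hcover d'.unop).choose
    rw [val_indep P f hmono Lk adj X s n₂ (max n₁ n₂) d'.unop _
        (pAll P hmono (le_max_right n₁ n₂) (hcover d'.unop).choose_spec),
      val_indep P f hmono Lk adj X s n₁ (max n₁ n₂) d.unop _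
        (pAll P hmono (le_max_left n₁ n₂) (hcover d.unop).choose_spec),
      val_natural P f hmono Lk adj X s (max n₁ n₂) e.unop]

lemma glue_app (hcover : ∀ d : D, ∃ n : ℕ, P n d) (d : D) (n : ℕ) (hd : P n d)
    (u : f.obj d ⟶ X) :
    (glue P f hmono Lk adj X s hcover).app (op d) u = val P f hmono Lk adj X s n d hd u :=
  val_indep P f hmono Lk adj X s _ n d (hcover d).choose_spec hd u

end Aux

/-- Let `D` be a small category which is the union of an increasing sequence of full
subcategories `Dₙ` (given by the predicates `P n`), let `C` be a cocomplete locally small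
category and let `f : D ⥤ C` be a dense functor (the restricted Yoneda functor is fully
faithful).  Then for every object `X` of `C` the canonical morphism
`colim_n f_{n!}(fₙ* X) ⟶ X` induced by the counits of the adjunctions `f_{n!} ⊣ fₙ*` is an
isomorphism; equivalently, the canonical cocone with apex `X` is a colimit cocone. -/
theorem stmt16 {D : Type u} [SmallCategory D] (P : ℕ → D → Prop)
    {C : Type u₂} [Category.{u} C] [HasColimitsOfSize.{u, u} C] (f : D ⥤ C)
    (hmono : ∀ (n : ℕ) (d : D), P n d → P (n + 1) d)
    (hcover : ∀ d : D, ∃ n : ℕ, P n d)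
    (hdense : (Presheaf.restrictedYoneda f).Full ∧ (Presheaf.restrictedYoneda f).Faithful)
    (Lk : ∀ n : ℕ, ((ObjectProperty.FullSubcategory (P n))ᵒᵖ ⥤ Type u) ⥤ C)
    (adj : ∀ n : ℕ, Lk n ⊣ Presheaf.restrictedYoneda (fRes P f n))
    (X : C) :
    Nonempty (IsColimit (canonicalCocone P f hmono Lk adj X)) := by
  haveI : (Presheaf.restrictedYoneda f).Full := hdense.1
  haveI : (Presheaf.restrictedYoneda f).Faithful := hdense.2
  refine ⟨{
    desc := fun s => (Presheaf.restrictedYoneda f).preimage (glue P f hmono Lk adj X s hcover),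
    fac := fun s n => ?_,
    uniq := fun s m hm => ?_ }⟩
  · have hmap := (Presheaf.restrictedYoneda f).map_preimage (glue P f hmono Lk adj X s hcover)
    have key : (Presheaf.restrictedYoneda (fRes P f n)).map
        ((Presheaf.restrictedYoneda f).preimage (glue P f hmono Lk adj X s hcover)) =
          (adj n).homEquiv _ _ (s.ι.app n) := by
      ext dd u
      exact (ConcreteCategory.congr_hom (NatTrans.congr_app hmap (op dd.unop.obj)) u).trans
        (glue_app P f hmono Lk adj X s hcover dd.unop.obj n dd.unop.property u)
    show (adj n).counit.app X ≫ _ = s.ι.app n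
    apply ((adj n).homEquiv _ _).injective
    erw [Adjunction.homEquiv_naturality_right, key, Adjunction.homEquiv_unit,
      (adj n).right_triangle_components, Category.id_comp]
  · apply (Presheaf.restrictedYoneda f).map_injective
    erw [(Presheaf.restrictedYoneda f).map_preimage]
    ext d u
    have key2 : ((adj ((hcover d.unop).choose)).homEquiv _ _)
        (s.ι.app ((hcover d.unop).choose)) =
          (Presheaf.restrictedYoneda (fRes P f ((hcover d.unop).choose))).map m := by
      rw [← hm ((hcover d.unop).choose)]
      have hι : (canonicalCocone P f hmono Lk adj X).ι.app ((hcover d.unop).choose) =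
          (adj ((hcover d.unop).choose)).counit.app X := rfl
      erw [hι, Adjunction.homEquiv_naturality_right, Adjunction.homEquiv_unit,
        (adj _).right_triangle_components, Category.id_comp]
    exact (ConcreteCategory.congr_hom (NatTrans.congr_app key2
      (op ⟨d.unop, (hcover d.unop).choose_spec⟩)) u).symm


end Stmt16
end
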